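/- arXiv:2409.16369 — 6 statements merged into one kernel-verified Lean document; each statement's English description precedes it below -/
import Mathlib

section
/- With D the Dirichlet kernel of order R, D'(θ_μ) = (-1)^{μ}/(2 sin(θ_μ/2)) for θ_μ = 2πμ/(2R+1), μ = 1,...,R; equivalently D'(-θ_μ) = (-1)^{μ+1}/(2 sin(θ_μ/2)). -/
open Real Finset

lemma dirichlet_deriv_aux (c : ℝ) (hc : c ≠ 0) (t : ℝ) (ht : Real.sin (t / 2) ≠ 0)
    (h0 : Real.sin (c * t / 2) = 0) :
    deriv (fun x => Real.sin (c * x / 2) / (c * Real.sin (x / 2))) t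
      = Real.cos (c * t / 2) / (2 * Real.sin (t / 2)) := by
  have h1 : HasDerivAt (fun x : ℝ => Real.sin (c * x / 2)) (Real.cos (c * t / 2) * (c / 2)) t := by
    have := (Real.hasDerivAt_sin (c * t / 2)).comp t
      (((hasDerivAt_id t).const_mul c).div_const 2)
    simpa [mul_comm, mul_div_assoc, Function.comp_def] using this
  have h2 : HasDerivAt (fun x : ℝ => c * Real.sin (x / 2))
      (c * (Real.cos (t / 2) * (1 / 2))) t := by
    have := ((Real.hasDerivAt_sin (t / 2)).comp t ((hasDerivAt_id t).div_const 2)).const_mul c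
    simpa using this
  have hd : c * Real.sin (t / 2) ≠ 0 := mul_ne_zero hc ht
  have : deriv (fun x => Real.sin (c * x / 2) / (c * Real.sin (x / 2))) t = _ := (h1.div h2 hd).deriv
  rw [this, h0]
  field_simp
  ring

theorem dirichlet_deriv_at_shift_points (R : ℕ) (hR : 1 ≤ R) (D : ℝ → ℝ)
    (hD : ∀ x : ℝ, D x = Real.sin ((2 * R + 1) * x / 2) / ((2 * R + 1) * Real.sin (x / 2)))
    (μ : ℕ) (hμ : 1 ≤ μ) (hμR : μ ≤ R) (θμ : ℝ) (hθ : θμ = 2 * Real.pi * μ / (2 * R + 1)) :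
    deriv D θμ = (-1 : ℝ) ^ μ / (2 * Real.sin (θμ / 2)) ∧
    deriv D (-θμ) = (-1 : ℝ) ^ (μ + 1) / (2 * Real.sin (θμ / 2)) := by
  set c : ℝ := 2 * R + 1 with hc
  have hcpos : (0 : ℝ) < c := by positivity
  have hcne : c ≠ 0 := ne_of_gt hcpos
  have hDf : D = fun x => Real.sin (c * x / 2) / (c * Real.sin (x / 2)) := funext hD
  have hct : c * θμ / 2 = μ * Real.pi := by
    rw [hθ]; field_simp
  have hsin0 : Real.sin (c * θμ / 2) = 0 := by rw [hct]; exact Real.sin_nat_mul_pi μ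
  have hcosv : Real.cos (c * θμ / 2) = (-1 : ℝ) ^ μ := by
    rw [hct]
    have := Real.cos_nat_mul_pi_sub 0 μ
    simpa using this
  have hθpos : 0 < θμ / 2 := by
    rw [hθ]
    have : (0 : ℝ) < (μ : ℝ) := by exact_mod_cast hμ
    positivity
  have hθlt : θμ / 2 < Real.pi := by
    rw [hθ, div_div, div_lt_iff₀ (by positivity : (0:ℝ) < c * 2)]
    have hμlt : (μ : ℝ) < c := by
      rw [hc]
      have : (μ : ℝ) ≤ R := by exact_mod_cast hμR
      linarith
    nlinarith [Real.pi_pos]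
  have hsinpos : 0 < Real.sin (θμ / 2) := Real.sin_pos_of_pos_of_lt_pi hθpos hθlt
  have hsne : Real.sin (θμ / 2) ≠ 0 := ne_of_gt hsinpos
  have hsne' : Real.sin (-θμ / 2) ≠ 0 := by
    rw [neg_div, Real.sin_neg]; exact neg_ne_zero.mpr hsne
  have hsin0' : Real.sin (c * -θμ / 2) = 0 := by
    rw [show c * -θμ / 2 = -(c * θμ / 2) by ring, Real.sin_neg, hsin0, neg_zero]
  have hcos' : Real.cos (c * -θμ / 2) = (-1 : ℝ) ^ μ := by
    rw [show c * -θμ / 2 = -(c * θμ / 2) by ring, Real.cos_neg, hcosv]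
  constructor
  · rw [hDf, dirichlet_deriv_aux c hcne θμ hsne hsin0, hcosv]
  · rw [hDf, dirichlet_deriv_aux c hcne (-θμ) hsne' hsin0', hcos']
    rw [neg_div, Real.sin_neg, pow_succ]
    field_simp
end

section
/- For any trigonometric polynomial f(θ) = ∑_{k=-R}^{R} c_k e^{ikθ} and any k-th derivative order, f^{(k)}(θ) = ∑_{μ=-R}^{R} f(θ + θ_μ) D^{(k)}(-θ_μ), where θ_μ = 2πμ/(2R+1) and D is the Dirichlet kernel of order R. -/
open Complex Finset

-- derivative of exp(a*x) wrt real x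
lemma hasDerivAt_cexp_mul (a : ℂ) (x : ℝ) :
    HasDerivAt (fun t : ℝ => Complex.exp (a * t)) (a * Complex.exp (a * x)) x := by
  have h1 : HasDerivAt (fun t : ℝ => (t : ℂ)) 1 x := by
    simpa using (hasDerivAt_id x).ofReal_comp
  have h2 := (h1.const_mul a).cexp
  simpa [mul_comm] using h2

lemma iteratedDeriv_sum_exp (s : Finset ℤ) (c : ℤ → ℂ) (k : ℕ) :
    iteratedDeriv k (fun θ : ℝ => ∑ j ∈ s, c j * Complex.exp (Complex.I * j * θ)) =
    fun θ : ℝ => ∑ j ∈ s, c j * (Complex.I * j)^k * Complex.exp (Complex.I * j * θ) := by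
  induction k generalizing c with
  | zero => simp
  | succ k ih =>
    rw [iteratedDeriv_succ']
    have hder : deriv (fun θ : ℝ => ∑ j ∈ s, c j * Complex.exp (Complex.I * j * θ)) =
        fun θ : ℝ => ∑ j ∈ s, (c j * (Complex.I * j)) * Complex.exp (Complex.I * j * θ) := by
      funext θ
      have h : HasDerivAt (fun θ : ℝ => ∑ j ∈ s, c j * Complex.exp (Complex.I * j * θ))
          (∑ j ∈ s, (c j * (Complex.I * j)) * Complex.exp (Complex.I * j * θ)) θ := by
        apply HasDerivAt.fun_sum
        intro j hj
        have h2 : (fun θ : ℝ => c j * Complex.exp (Complex.I * j * θ))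
            = fun θ : ℝ => c j * Complex.exp ((Complex.I * j) * θ) := by rfl
        have := (hasDerivAt_cexp_mul (Complex.I * j) θ).const_mul (c j)
        convert this using 1
        · rfl
        ring
      exact h.deriv
    rw [hder, ih (fun j => c j * (Complex.I * j))]
    funext θ
    refine Finset.sum_congr rfl fun j hj => ?_
    ring

lemma telescope_zpow (ω : ℂ) (hω : ω ≠ 0) (a : ℤ) :
    ∀ b : ℤ, a ≤ b → (ω - 1) * ∑ μ ∈ Finset.Icc a b, ω ^ μ = ω ^ (b+1) - ω ^ a := by
  refine Int.le_induction ?_ ?_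
  · simp only [Finset.Icc_self, Finset.sum_singleton]
    rw [zpow_add_one₀ hω]
    ring
  · intro b hb ih
    have hins : Finset.Icc a (b+1) = insert (b+1) (Finset.Icc a b) := by
      ext x; simp only [Finset.mem_Icc, Finset.mem_insert]; omega
    rw [hins, Finset.sum_insert (by simp [Finset.mem_Icc])]
    rw [mul_add, ih, zpow_add_one₀ hω (b+1)]
    ring

lemma orth_sum (R : ℕ) (m : ℤ) (hm : m ≠ 0) (hm2 : m.natAbs ≤ 2*R) :
    ∑ μ ∈ Finset.Icc (-(R:ℤ)) R,
      Complex.exp (Complex.I * m * (2 * Real.pi * μ / (2*R+1))) = 0 := by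
  set ω : ℂ := Complex.exp (Complex.I * m * (2 * Real.pi / (2*R+1))) with hωdef
  have hRne : (2*(R:ℂ)+1) ≠ 0 := by
    intro h
    have h2 : ((2*R+1:ℕ):ℂ) = ((0:ℕ):ℂ) := by push_cast; linear_combination h
    have := Nat.cast_inj (R := ℂ) |>.mp h2
    omega
  have hterm : ∀ μ : ℤ, Complex.exp (Complex.I * m * (2 * Real.pi * μ / (2*R+1))) = ω ^ μ := by
    intro μ
    rw [hωdef, ← Complex.exp_int_mul]
    congr 1
    ring
  have hω0 : ω ≠ 0 := Complex.exp_ne_zero _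
  have hpow : ω ^ ((2*R+1 : ℕ) : ℤ) = 1 := by
    rw [zpow_natCast, hωdef, ← Complex.exp_nat_mul]
    have harg : ((2*R+1:ℕ):ℂ) * (Complex.I * m * (2 * Real.pi / (2*R+1))) = m * (2 * Real.pi * Complex.I) := by
      field_simp
      push_cast
      ring
    rw [harg]
    exact_mod_cast Complex.exp_int_mul_two_pi_mul_I m
  have hω1 : ω ≠ 1 := by
    intro h
    rw [hωdef, Complex.exp_eq_one_iff] at h
    obtain ⟨n, hn⟩ := h
    have h3 : ((m:ℂ) - n*(2*(R:ℂ)+1)) * (2*(Real.pi:ℂ)*Complex.I) = 0 := by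
      field_simp [hRne] at hn
      linear_combination (2*(Real.pi:ℂ)*Complex.I) * hn
    have h5 : (2*(Real.pi:ℂ)*Complex.I) ≠ 0 := by
      simp [Real.pi_ne_zero, Complex.I_ne_zero, Complex.ofReal_ne_zero]
    have h6 : (m:ℂ) = ((n*(2*R+1):ℤ):ℂ) := by
      have := (mul_eq_zero.mp h3).resolve_right h5
      push_cast
      linear_combination this
    have hm' : m = n * (2*R+1) := by exact_mod_cast h6
    rcases eq_or_ne n 0 with rfl | hn0
    · simp at hm'; omega
    · have habs : (2*(R:ℤ)+1) ≤ |m| := by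
        rw [hm', abs_mul, abs_of_nonneg (show (0:ℤ) ≤ 2*R+1 by omega)]
        have h7 : 1 ≤ |n| := Int.one_le_abs hn0
        nlinarith
      rw [Int.abs_eq_natAbs] at habs
      omega
  have htel := telescope_zpow ω hω0 (-(R:ℤ)) R (by omega)
  have hzero : ω ^ ((R:ℤ)+1) - ω ^ (-(R:ℤ)) = 0 := by
    have he : ((R:ℤ)+1) = (-(R:ℤ)) + ((2*R+1:ℕ):ℤ) := by push_cast; ring
    rw [he, zpow_add₀ hω0, hpow, mul_one, sub_self]
  rw [hzero] at htel
  rcases mul_eq_zero.mp htel with h | h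
  · exact absurd (by linear_combination h : ω = 1) hω1
  · calc ∑ μ ∈ Finset.Icc (-(R:ℤ)) R, Complex.exp (Complex.I * m * (2 * Real.pi * μ / (2*R+1)))
        = ∑ μ ∈ Finset.Icc (-(R:ℤ)) R, ω ^ μ := Finset.sum_congr rfl fun μ _ => hterm μ
      _ = 0 := h

lemma key_sum (R : ℕ) (θpt : ℤ → ℝ) (hθ : ∀ μ : ℤ, θpt μ = 2 * Real.pi * μ / (2 * R + 1))
    (θ : ℝ) (j l : ℤ) (hj : j ∈ Finset.Icc (-(R:ℤ)) R) (hl : l ∈ Finset.Icc (-(R:ℤ)) R) :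
    ∑ μ ∈ Finset.Icc (-(R:ℤ)) R,
      Complex.exp (Complex.I * j * ((θ + θpt μ : ℝ) : ℂ)) *
        Complex.exp (Complex.I * l * ((-θpt μ : ℝ) : ℂ))
    = if l = j then (2*(R:ℂ)+1) * Complex.exp (Complex.I * j * (θ : ℂ)) else 0 := by
  have hterm : ∀ μ : ℤ,
      Complex.exp (Complex.I * j * ((θ + θpt μ : ℝ) : ℂ)) *
        Complex.exp (Complex.I * l * ((-θpt μ : ℝ) : ℂ))
      = Complex.exp (Complex.I * j * (θ:ℂ)) *
          Complex.exp (Complex.I * (j - l) * (2 * Real.pi * μ / (2*R+1))) := by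
    intro μ
    rw [← Complex.exp_add, ← Complex.exp_add]
    congr 1
    rw [hθ μ]
    push_cast
    ring
  rw [Finset.sum_congr rfl fun μ _ => hterm μ, ← Finset.mul_sum]
  by_cases h : l = j
  · subst h
    rw [if_pos rfl]
    simp only [sub_self, mul_zero, zero_mul, Complex.exp_zero]
    rw [Finset.sum_const, nsmul_eq_mul, Int.card_Icc]
    have hcard : ((R:ℤ) + 1 - -(R:ℤ)).toNat = 2*R+1 := by omega
    rw [hcard]
    push_cast
    ring
  · rw [if_neg h]
    have hm : j - l ≠ 0 := sub_ne_zero.2 (Ne.symm h)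
    have hm2 : (j - l).natAbs ≤ 2*R := by
      simp only [Finset.mem_Icc] at hj hl
      omega
    have horth := orth_sum R (j - l) hm hm2
    push_cast at horth
    rw [horth, mul_zero]

theorem generalized_parameter_shift_rule (R : ℕ) (hR : 1 ≤ R) (c : ℤ → ℂ)
    (f : ℝ → ℂ)
    (hf : ∀ θ : ℝ, f θ = ∑ k ∈ Finset.Icc (-(R : ℤ)) R, c k * Complex.exp (Complex.I * k * θ))
    (D : ℝ → ℂ)
    (hD : ∀ x : ℝ, D x = (1 / (2 * (R : ℂ) + 1)) *
      ∑ j ∈ Finset.Icc (-(R : ℤ)) R, Complex.exp (Complex.I * j * x))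
    (θpt : ℤ → ℝ) (hθ : ∀ μ : ℤ, θpt μ = 2 * Real.pi * μ / (2 * R + 1))
    (k : ℕ) :
    ∀ θ : ℝ, iteratedDeriv k f θ =
      ∑ μ ∈ Finset.Icc (-(R : ℤ)) R, f (θ + θpt μ) * iteratedDeriv k D (-θpt μ) := by
  intro θ
  set S := Finset.Icc (-(R:ℤ)) R with hS
  have hRne : (2*(R:ℂ)+1) ≠ 0 := by
    intro h
    have h2 : ((2*R+1:ℕ):ℂ) = ((0:ℕ):ℂ) := by push_cast; linear_combination h
    have := Nat.cast_inj (R := ℂ) |>.mp h2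
    omega
  have hf' : iteratedDeriv k f = fun x : ℝ =>
      ∑ j ∈ S, c j * (Complex.I * j)^k * Complex.exp (Complex.I * j * x) := by
    have hfe : f = fun x : ℝ => ∑ j ∈ S, c j * Complex.exp (Complex.I * j * x) := funext hf
    rw [hfe, iteratedDeriv_sum_exp]
  have hD' : iteratedDeriv k D = fun x : ℝ =>
      ∑ l ∈ S, (1/(2*(R:ℂ)+1)) * (Complex.I * l)^k * Complex.exp (Complex.I * l * x) := by
    have hDe : D = fun x : ℝ => ∑ l ∈ S, (1/(2*(R:ℂ)+1)) * Complex.exp (Complex.I * l * x) := by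
      funext x; rw [hD x, Finset.mul_sum]
    rw [hDe, iteratedDeriv_sum_exp]
  simp only [hf', hD', hf]
  calc ∑ j ∈ S, c j * (Complex.I * j)^k * Complex.exp (Complex.I * j * (θ:ℂ))
      = ∑ j ∈ S, ∑ l ∈ S, (c j * ((1/(2*(R:ℂ)+1)) * (Complex.I * l)^k)) *
          (if l = j then (2*(R:ℂ)+1) * Complex.exp (Complex.I * j * (θ:ℂ)) else 0) := by
        refine Finset.sum_congr rfl fun j hj => ?_
        simp only [mul_ite, mul_zero]
        rw [Finset.sum_ite_eq' S j, if_pos hj]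
        field_simp
    _ = ∑ j ∈ S, ∑ l ∈ S, (c j * ((1/(2*(R:ℂ)+1)) * (Complex.I * l)^k)) *
          ∑ μ ∈ S, Complex.exp (Complex.I * j * ((θ + θpt μ : ℝ):ℂ)) *
            Complex.exp (Complex.I * l * ((-θpt μ : ℝ):ℂ)) := by
        refine Finset.sum_congr rfl fun j hj => Finset.sum_congr rfl fun l hl => ?_
        rw [key_sum R θpt hθ θ j l hj hl]
    _ = ∑ j ∈ S, ∑ l ∈ S, ∑ μ ∈ S, (c j * ((1/(2*(R:ℂ)+1)) * (Complex.I * l)^k)) *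
          (Complex.exp (Complex.I * j * ((θ + θpt μ : ℝ):ℂ)) *
            Complex.exp (Complex.I * l * ((-θpt μ : ℝ):ℂ))) := by
        exact Finset.sum_congr rfl fun j _ => Finset.sum_congr rfl fun l _ => Finset.mul_sum _ _ _
    _ = ∑ j ∈ S, ∑ μ ∈ S, ∑ l ∈ S, (c j * ((1/(2*(R:ℂ)+1)) * (Complex.I * l)^k)) *
          (Complex.exp (Complex.I * j * ((θ + θpt μ : ℝ):ℂ)) *
            Complex.exp (Complex.I * l * ((-θpt μ : ℝ):ℂ))) :=
        Finset.sum_congr rfl fun j _ => Finset.sum_comm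
    _ = ∑ μ ∈ S, ∑ j ∈ S, ∑ l ∈ S, (c j * ((1/(2*(R:ℂ)+1)) * (Complex.I * l)^k)) *
          (Complex.exp (Complex.I * j * ((θ + θpt μ : ℝ):ℂ)) *
            Complex.exp (Complex.I * l * ((-θpt μ : ℝ):ℂ))) := Finset.sum_comm
    _ = ∑ μ ∈ S, (∑ j ∈ S, c j * Complex.exp (Complex.I * j * ((θ + θpt μ : ℝ):ℂ))) *
          ∑ l ∈ S, (1/(2*(R:ℂ)+1)) * (Complex.I * l)^k *
            Complex.exp (Complex.I * l * ((-θpt μ : ℝ):ℂ)) := by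
        refine Finset.sum_congr rfl fun μ _ => ?_
        rw [Finset.sum_mul_sum]
        exact Finset.sum_congr rfl fun j _ => Finset.sum_congr rfl fun l _ => by ring
end

section
/- For any trigonometric polynomial f(θ) = ∑_{k=-R}^{R} c_k e^{ikθ}, the first derivative satisfies f'(θ) = ∑_{μ=1}^{R} (f(θ + θ_μ) - f(θ - θ_μ)) · (-1)^{μ+1}/(2 sin(θ_μ/2)), where θ_μ = 2πμ/(2R+1). -/
open Complex Finset

lemma sumaux (x : ℂ) (hx : x ≠ 0) (R : ℕ) :
    (∑ μ ∈ Finset.Icc 1 R, (x^μ + x⁻¹^μ)) * x^R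
      = (∑ μ ∈ Finset.range (2*R+1), x^μ) - x^R := by
  induction R with
  | zero => simp
  | succ n ih =>
    rw [Finset.sum_Icc_succ_top (by omega : 1 ≤ n+1)]
    have h1 : 2*(n+1)+1 = (2*n+1)+1+1 := by ring
    rw [h1, Finset.sum_range_succ, Finset.sum_range_succ]
    have hinv : x⁻¹^(n+1) * x^(n+1) = 1 := by
      rw [← mul_pow, inv_mul_cancel₀ hx, one_pow]
    have hmain : (∑ μ ∈ Finset.Icc 1 n, (x^μ + x⁻¹^μ)) * x^(n+1)
        = ((∑ μ ∈ Finset.range (2*n+1), x^μ) - x^n) * x := by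
      rw [← ih]; ring
    have hshift : ∑ μ ∈ Finset.range (2*n+1), x^μ * x
        = ∑ μ ∈ Finset.range (2*n+1), x^μ - 1 + x^(2*n+1) := by
      have h := Finset.sum_range_succ' (fun μ => x^μ) (2*n+1)
      have h2 := Finset.sum_range_succ (fun μ => x^μ) (2*n+1)
      simp only [pow_succ, pow_zero] at h
      linear_combination h2 - h
    calc (∑ μ ∈ Finset.Icc 1 n, (x^μ + x⁻¹^μ) + (x^(n+1) + x⁻¹^(n+1))) * x^(n+1)
        = (∑ μ ∈ Finset.Icc 1 n, (x^μ + x⁻¹^μ)) * x^(n+1)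
            + x^(n+1)*x^(n+1) + x⁻¹^(n+1)*x^(n+1) := by ring
      _ = ((∑ μ ∈ Finset.range (2*n+1), x^μ) - x^n) * x + x^(n+1)*x^(n+1) + 1 := by
            rw [hmain, hinv]
      _ = (∑ μ ∈ Finset.range (2*n+1), x^μ) * x + x^(2*n+1+1) - x^(n+1) + 1 := by ring
      _ = _ := by rw [Finset.sum_mul, hshift]; ring

lemma cos_sum (R j : ℕ) (hj : 1 ≤ j) (hjR : j ≤ R) :
    ∑ μ ∈ Finset.Icc 1 R, (-1:ℝ)^(μ+1) * (2 * Real.cos ((2*(j:ℝ)-1) * Real.pi * μ / (2*R+1))) = 1 := by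
  have h2 : ((2*R+1 : ℕ):ℂ) ≠ 0 := Nat.cast_ne_zero.mpr (by omega)
  push_cast at h2
  set x : ℂ := Complex.exp (2*(Real.pi:ℂ)*((R:ℂ)+(j:ℂ))/(2*(R:ℂ)+1) * I) with hx
  have hx0 : x ≠ 0 := Complex.exp_ne_zero _
  have hxN : x ^ (2*R+1) = 1 := by
    rw [hx, ← Complex.exp_nat_mul]
    rw [show ((2*R+1:ℕ):ℂ) * (2*(Real.pi:ℂ)*((R:ℂ)+(j:ℂ))/(2*(R:ℂ)+1) * I)
        = ((R+j : ℕ):ℂ) * (2*Real.pi*I) by push_cast; field_simp]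
    exact Complex.exp_nat_mul_two_pi_mul_I (R+j)
  have hx1 : x ≠ 1 := by
    rw [hx]
    intro h
    rw [Complex.exp_eq_one_iff] at h
    obtain ⟨n, hn⟩ := h
    have hIne : (2*(Real.pi:ℂ)*I : ℂ) ≠ 0 := by
      simp [Real.pi_ne_zero, Complex.I_ne_zero]
    have hc : ((((R:ℝ)+j)/(2*(R:ℝ)+1) : ℝ) : ℂ) = (n:ℂ) := by
      apply mul_right_cancel₀ hIne
      rw [← hn]
      push_cast
      field_simp
    have hr : ((R:ℝ)+j)/(2*(R:ℝ)+1) = (n:ℝ) := by exact_mod_cast hc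
    have h1 : (0:ℝ) < ((R:ℝ)+j)/(2*(R:ℝ)+1) := by
      apply div_pos
      · have : (1:ℝ) ≤ (j:ℝ) := by exact_mod_cast hj
        positivity
      · positivity
    have h2' : ((R:ℝ)+j)/(2*(R:ℝ)+1) < 1 := by
      rw [div_lt_one (by positivity)]
      have : (j:ℝ) ≤ R := by exact_mod_cast hjR
      linarith
    rw [hr] at h1 h2'
    have hn1 : (0:ℤ) < n := by exact_mod_cast h1
    have hn2 : n < 1 := by exact_mod_cast h2'
    omega
  have hgeom : ∑ μ ∈ Finset.range (2*R+1), x^μ = 0 := by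
    rw [geom_sum_eq hx1, hxN]
    simp
  have hS : ∑ μ ∈ Finset.Icc 1 R, (x^μ + x⁻¹^μ) = -1 := by
    have h := sumaux x hx0 R
    rw [hgeom, zero_sub] at h
    have hxR : x^R ≠ 0 := pow_ne_zero _ hx0
    apply mul_right_cancel₀ hxR
    rw [h]; ring
  have term : ∀ μ : ℕ,
      (((-1:ℝ)^(μ+1) * (2 * Real.cos ((2*(j:ℝ)-1) * Real.pi * μ / (2*R+1))) : ℝ) : ℂ)
        = -(x^μ + x⁻¹^μ) := by
    intro μ
    push_cast
    rw [← Complex.cosh_mul_I, Complex.two_cosh]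
    rw [hx, ← Complex.exp_neg, ← Complex.exp_nat_mul, ← Complex.exp_nat_mul]
    have hm1 : (-1:ℂ)^(μ+1) = -Complex.exp (↑μ*(↑Real.pi*I)) := by
      rw [Complex.exp_nat_mul, Complex.exp_pi_mul_I]; ring
    rw [hm1]
    set T : ℂ := (2*(j:ℂ)-1) * (Real.pi:ℂ) * (μ:ℂ) / (2*(R:ℂ)+1) with hT
    have e1 : Complex.exp (↑μ*(↑Real.pi*I)) * Complex.exp (T*I)
        = Complex.exp ((μ:ℂ) * (2*(Real.pi:ℂ)*((R:ℂ)+(j:ℂ))/(2*(R:ℂ)+1) * I)) := by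
      rw [← Complex.exp_add]
      congr 1
      rw [hT]
      field_simp
      ring
    have e2 : Complex.exp (↑μ*(↑Real.pi*I)) * Complex.exp (-(T*I))
        = Complex.exp ((μ:ℂ) * -(2*(Real.pi:ℂ)*((R:ℂ)+(j:ℂ))/(2*(R:ℂ)+1) * I)) := by
      rw [← Complex.exp_add]
      rw [show ↑μ*((Real.pi:ℂ)*I) + -(T*I)
          = (μ:ℂ) * -(2*(Real.pi:ℂ)*((R:ℂ)+(j:ℂ))/(2*(R:ℂ)+1) * I) + (μ:ℂ)*(2*(Real.pi:ℂ)*I) by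
        rw [hT]; field_simp; ring]
      rw [Complex.exp_add, Complex.exp_nat_mul_two_pi_mul_I, mul_one]
    calc -Complex.exp (↑μ*(↑Real.pi*I)) * (Complex.exp (T*I) + Complex.exp (-(T*I)))
        = -(Complex.exp (↑μ*(↑Real.pi*I)) * Complex.exp (T*I)
            + Complex.exp (↑μ*(↑Real.pi*I)) * Complex.exp (-(T*I))) := by ring
      _ = _ := by rw [e1, e2]
  have key : ∑ μ ∈ Finset.Icc 1 R,
      (((-1:ℝ)^(μ+1) * (2 * Real.cos ((2*(j:ℝ)-1) * Real.pi * μ / (2*R+1))) : ℝ) : ℂ) = 1 := by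
    rw [Finset.sum_congr rfl (fun μ _ => term μ)]
    rw [Finset.sum_neg_distrib, hS]
    norm_num
  exact_mod_cast key

lemma sin_expand (a : ℝ) (k : ℕ) :
    Real.sin (k * a) = Real.sin (a/2) * ∑ j ∈ Finset.Icc 1 k, 2 * Real.cos ((2*(j:ℝ)-1)*a/2) := by
  induction k with
  | zero => simp
  | succ n ih =>
    rw [Finset.sum_Icc_succ_top (by omega : 1 ≤ n+1), mul_add, ← ih]
    have h := Real.sin_sub_sin ((n+1 : ℝ) * a) ((n : ℝ) * a)
    have e1 : ((n+1:ℝ)*a - (n:ℝ)*a)/2 = a/2 := by ring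
    have e2 : ((n+1:ℝ)*a + (n:ℝ)*a)/2 = (2*((n:ℝ)+1)-1)*a/2 := by ring
    rw [e1, e2] at h
    push_cast
    linarith

lemma sin_quot_sum (R k : ℕ) (hk : k ≤ R) :
    ∑ μ ∈ Finset.Icc 1 R, Real.sin ((k:ℝ) * (2*Real.pi*μ/(2*R+1)))
      * ((-1:ℝ)^(μ+1) / (2 * Real.sin (2*Real.pi*μ/(2*R+1)/2))) = (k:ℝ)/2 := by
  have step : ∀ μ ∈ Finset.Icc 1 R,
      Real.sin ((k:ℝ) * (2*Real.pi*μ/(2*R+1)))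
        * ((-1:ℝ)^(μ+1) / (2 * Real.sin (2*Real.pi*μ/(2*R+1)/2)))
      = (1/2) * ∑ j ∈ Finset.Icc 1 k, (-1:ℝ)^(μ+1) * (2 * Real.cos ((2*(j:ℝ)-1) * Real.pi * μ / (2*R+1))) := by
    intro μ hμ
    rw [Finset.mem_Icc] at hμ
    have hB1 : (0:ℝ) < Real.pi * μ / (2*R+1) := by
      have : (1:ℝ) ≤ (μ:ℝ) := by exact_mod_cast hμ.1
      have := Real.pi_pos
      positivity
    have hB2 : Real.pi * μ / (2*R+1) < Real.pi := by
      rw [div_lt_iff₀ (by positivity)]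
      have h1 : (μ:ℝ) ≤ R := by exact_mod_cast hμ.2
      have := Real.pi_pos
      nlinarith
    have hs : Real.sin (Real.pi * μ / (2*R+1)) ≠ 0 :=
      ne_of_gt (Real.sin_pos_of_pos_of_lt_pi hB1 hB2)
    have e2 : (2*Real.pi*(μ:ℝ)/(2*R+1))/2 = Real.pi*μ/(2*R+1) := by ring
    rw [sin_expand (2*Real.pi*(μ:ℝ)/(2*R+1)) k, e2]
    have e3 : ∀ j : ℕ, (2*(j:ℝ)-1) * (2*Real.pi*(μ:ℝ)/(2*R+1)) / 2
        = (2*(j:ℝ)-1) * Real.pi * μ / (2*R+1) := fun j => by ring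
    simp_rw [e3]
    rw [Finset.mul_sum, Finset.mul_sum]
    rw [Finset.sum_mul]
    apply Finset.sum_congr rfl
    intro j _
    field_simp
  rw [Finset.sum_congr rfl step, ← Finset.mul_sum, Finset.sum_comm]
  have inner : ∀ j ∈ Finset.Icc 1 k,
      ∑ μ ∈ Finset.Icc 1 R, (-1:ℝ)^(μ+1) * (2 * Real.cos ((2*(j:ℝ)-1) * Real.pi * μ / (2*R+1))) = 1 := by
    intro j hj
    rw [Finset.mem_Icc] at hj
    exact cos_sum R j hj.1 (le_trans hj.2 hk)
  rw [Finset.sum_congr rfl inner]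
  simp [Nat.card_Icc]
  ring

lemma sin_quot_sum_int (R : ℕ) (k : ℤ) (hk1 : -(R:ℤ) ≤ k) (hk2 : k ≤ R) :
    ∑ μ ∈ Finset.Icc 1 R, Real.sin ((k:ℝ) * (2*Real.pi*μ/(2*R+1)))
      * ((-1:ℝ)^(μ+1) / (2 * Real.sin (2*Real.pi*μ/(2*R+1)/2))) = (k:ℝ)/2 := by
  rcases le_or_gt 0 k with hk0 | hk0
  · obtain ⟨n, rfl⟩ : ∃ n:ℕ, k = (n:ℤ) := ⟨k.toNat, by omega⟩
    have hn : n ≤ R := by exact_mod_cast hk2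
    have hD := sin_quot_sum R n hn
    push_cast
    push_cast at hD
    exact hD
  · obtain ⟨n, rfl⟩ : ∃ n:ℕ, k = -(n:ℤ) := ⟨(-k).toNat, by omega⟩
    have hn : n ≤ R := by omega
    have hD := sin_quot_sum R n hn
    push_cast
    rw [show ∑ μ ∈ Finset.Icc 1 R, Real.sin (-(n:ℝ) * (2*Real.pi*μ/(2*R+1)))
        * ((-1:ℝ)^(μ+1) / (2 * Real.sin (2*Real.pi*μ/(2*R+1)/2)))
      = -∑ μ ∈ Finset.Icc 1 R, Real.sin ((n:ℝ) * (2*Real.pi*μ/(2*R+1)))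
        * ((-1:ℝ)^(μ+1) / (2 * Real.sin (2*Real.pi*μ/(2*R+1)/2))) by
        rw [← Finset.sum_neg_distrib]
        apply Finset.sum_congr rfl
        intro μ _
        rw [show -(n:ℝ) * (2*Real.pi*μ/(2*R+1)) = -((n:ℝ) * (2*Real.pi*μ/(2*R+1))) by ring,
          Real.sin_neg]
        ring]
    rw [hD]
    ring

lemma exp_diff_sum (R : ℕ) (k : ℤ) (hk1 : -(R:ℤ) ≤ k) (hk2 : k ≤ R) :
    ∑ μ ∈ Finset.Icc 1 R,
      (Complex.exp (I*(k:ℂ)*((2*Real.pi*(μ:ℝ)/(2*R+1) : ℝ):ℂ))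
        - Complex.exp (-(I*(k:ℂ)*((2*Real.pi*(μ:ℝ)/(2*R+1) : ℝ):ℂ))))
        * (((-1:ℝ)^(μ+1)/(2*Real.sin ((2*Real.pi*(μ:ℝ)/(2*R+1))/2)) : ℝ):ℂ)
      = I*(k:ℂ) := by
  have hterm : ∀ μ : ℕ,
      (Complex.exp (I*(k:ℂ)*((2*Real.pi*(μ:ℝ)/(2*R+1) : ℝ):ℂ))
        - Complex.exp (-(I*(k:ℂ)*((2*Real.pi*(μ:ℝ)/(2*R+1) : ℝ):ℂ))))
        * (((-1:ℝ)^(μ+1)/(2*Real.sin ((2*Real.pi*(μ:ℝ)/(2*R+1))/2)) : ℝ):ℂ)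
      = I * ((2 * (Real.sin ((k:ℝ)*(2*Real.pi*(μ:ℝ)/(2*R+1)))
          * ((-1:ℝ)^(μ+1)/(2*Real.sin ((2*Real.pi*(μ:ℝ)/(2*R+1))/2)))) : ℝ) : ℂ) := by
    intro μ
    set t : ℝ := (k:ℝ)*(2*Real.pi*(μ:ℝ)/(2*R+1)) with ht
    have h1 : I*(k:ℂ)*((2*Real.pi*(μ:ℝ)/(2*R+1) : ℝ):ℂ) = ((t:ℝ):ℂ) * I := by
      rw [ht]; push_cast; ring
    rw [h1]
    rw [show Complex.exp (((t:ℝ):ℂ)*I) - Complex.exp (-(((t:ℝ):ℂ)*I))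
        = 2*Complex.sinh (((t:ℝ):ℂ)*I) from (Complex.two_sinh _).symm]
    rw [Complex.sinh_mul_I, ← Complex.ofReal_sin]
    push_cast
    ring
  rw [Finset.sum_congr rfl (fun μ _ => hterm μ), ← Finset.mul_sum]
  have hr : ∑ μ ∈ Finset.Icc 1 R, (2 * (Real.sin ((k:ℝ)*(2*Real.pi*(μ:ℝ)/(2*R+1)))
          * ((-1:ℝ)^(μ+1)/(2*Real.sin ((2*Real.pi*(μ:ℝ)/(2*R+1))/2))))) = (k:ℝ) := by
    rw [← Finset.mul_sum, sin_quot_sum_int R k hk1 hk2]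
    ring
  rw [← Complex.ofReal_sum, hr]
  norm_cast

theorem first_order_gpsr (R : ℕ) (hR : 1 ≤ R) (c : ℤ → ℂ)
    (f : ℝ → ℂ)
    (hf : ∀ θ : ℝ, f θ = ∑ k ∈ Finset.Icc (-(R : ℤ)) R, c k * Complex.exp (Complex.I * k * θ))
    (θpt : ℕ → ℝ) (hθ : ∀ μ : ℕ, θpt μ = 2 * Real.pi * μ / (2 * R + 1)) :
    ∀ θ : ℝ, deriv f θ =
      ∑ μ ∈ Finset.Icc 1 R, (f (θ + θpt μ) - f (θ - θpt μ)) *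
        (((-1 : ℝ) ^ (μ + 1) / (2 * Real.sin (θpt μ / 2)) : ℝ) : ℂ) := by
  intro θ
  have hF : f = fun θ:ℝ => ∑ k ∈ Finset.Icc (-(R:ℤ)) R, c k * Complex.exp (I*(k:ℂ)*(θ:ℂ)) :=
    funext hf
  have hd : HasDerivAt f
      (∑ k ∈ Finset.Icc (-(R:ℤ)) R, c k * (Complex.exp (I*(k:ℂ)*(θ:ℂ)) * (I*(k:ℂ)))) θ := by
    rw [hF]
    apply HasDerivAt.fun_sum
    intro k _
    have h1 : HasDerivAt (fun θ:ℝ => I*(k:ℂ)*(θ:ℂ)) (I*(k:ℂ)) θ := by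
      simpa using (Complex.ofRealCLM.hasDerivAt (x := θ)).const_mul (I*(k:ℂ))
    exact (h1.cexp).const_mul (c k)
  rw [hd.deriv]
  have step1 : ∀ μ ∈ Finset.Icc 1 R,
      (f (θ + θpt μ) - f (θ - θpt μ)) * (((-1 : ℝ) ^ (μ + 1) / (2 * Real.sin (θpt μ / 2)) : ℝ) : ℂ)
      = ∑ k ∈ Finset.Icc (-(R:ℤ)) R, c k * Complex.exp (I*(k:ℂ)*(θ:ℂ)) *
          ((Complex.exp (I*(k:ℂ)*((θpt μ : ℝ):ℂ)) - Complex.exp (-(I*(k:ℂ)*((θpt μ : ℝ):ℂ))))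
            * (((-1:ℝ)^(μ+1)/(2*Real.sin (θpt μ/2)) : ℝ):ℂ)) := by
    intro μ _
    rw [hf, hf, ← Finset.sum_sub_distrib, Finset.sum_mul]
    apply Finset.sum_congr rfl
    intro k _
    have e1 : I*(k:ℂ)*((θ + θpt μ : ℝ):ℂ) = I*(k:ℂ)*(θ:ℂ) + I*(k:ℂ)*((θpt μ : ℝ):ℂ) := by
      push_cast; ring
    have e2 : I*(k:ℂ)*((θ - θpt μ : ℝ):ℂ) = I*(k:ℂ)*(θ:ℂ) + -(I*(k:ℂ)*((θpt μ : ℝ):ℂ)) := by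
      push_cast; ring
    rw [e1, e2, Complex.exp_add, Complex.exp_add]
    ring
  rw [Finset.sum_congr rfl step1, Finset.sum_comm]
  apply Finset.sum_congr rfl
  intro k hk
  rw [Finset.mem_Icc] at hk
  rw [← Finset.mul_sum]
  have hE := exp_diff_sum R k hk.1 hk.2
  simp_rw [hθ]
  push_cast
  push_cast at hE
  rw [hE]
  ring
end

section
/- For any trigonometric polynomial f(θ) = a_0/2 + ∑_{k=1}^{R} (a_k cos(kθ) + b_k sin(kθ)) with real coefficients, f(θ) = a_R cos(Rθ) + ∑_{μ=1}^{2R} f(θ_μ) D*(θ - θ_μ), where θ_μ = (2μ-1)π/(2R) and D* is the modified Dirichlet kernel of order R. -/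
open Real Finset

/-- The modified Dirichlet kernel of order `R`, in its smooth cosine-sum form;
it equals `sin (R x) / (2 R * tan (x / 2))` wherever the latter is defined. -/
noncomputable def modDirichlet (R : ℕ) (x : ℝ) : ℝ :=
  1 / (2 * R) + Real.cos (R * x) / (2 * R) +
    (1 / R) * ∑ k ∈ Finset.Icc 1 (R - 1), Real.cos (k * x)

noncomputable def nd (R μ : ℕ) : ℝ := (2 * (μ:ℝ) - 1) * Real.pi / (2 * (R:ℝ))

lemma csum (R : ℕ) (hR : 1 ≤ R) (n : ℤ) (hn : ¬ ((2 * (R:ℤ)) ∣ n)) :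
    ∑ μ ∈ Finset.Icc 1 (2*R), Complex.exp ((((n:ℝ) * nd R μ : ℝ) : ℂ) * Complex.I) = 0 := by
  have hR0 : (R:ℝ) ≠ 0 := by positivity
  set ω : ℂ := Complex.exp ((((n:ℝ) * π / R : ℝ) : ℂ) * Complex.I) with hωdef
  have hω2R : ω ^ (2*R) = 1 := by
    rw [← Complex.exp_nat_mul]
    have h : ((2*R : ℕ) : ℂ) * ((((n:ℝ) * π / R : ℝ) : ℂ) * Complex.I)
        = (n:ℂ) * (2 * (π:ℂ) * Complex.I) := by
      push_cast
      have : (R:ℂ) ≠ 0 := by exact_mod_cast (by positivity : (R:ℝ) ≠ 0)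
      field_simp
    rw [h, Complex.exp_int_mul_two_pi_mul_I]
  have hω1 : ω ≠ 1 := by
    intro h
    obtain ⟨m, hm⟩ := Complex.exp_eq_one_iff.mp h
    have hm' : (((n:ℝ) * π / R : ℝ) : ℂ) * Complex.I = (((m:ℝ) * (2*π) : ℝ) : ℂ) * Complex.I := by
      rw [hm]; push_cast; ring
    have hre : ((n:ℝ) * π / R : ℝ) = ((m:ℝ) * (2*π) : ℝ) := by
      exact_mod_cast mul_right_cancel₀ Complex.I_ne_zero hm'
    have hr2 : (n:ℝ) * π = ((m:ℝ) * (2 * R)) * π := by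
      field_simp at hre
      rw [hre]; ring
    have hr3 : (n:ℝ) = (m:ℝ) * (2*R) := mul_right_cancel₀ Real.pi_ne_zero hr2
    have : n = 2 * (R:ℤ) * m := by exact_mod_cast (by linarith : (n:ℝ) = 2*(R:ℝ)*(m:ℝ))
    exact hn ⟨m, this⟩
  have hrw : ∑ μ ∈ Finset.Icc 1 (2*R), Complex.exp ((((n:ℝ) * nd R μ : ℝ) : ℂ) * Complex.I)
      = ∑ i ∈ Finset.range (2*R), Complex.exp ((((n:ℝ) * π / (2*R) : ℝ) : ℂ) * Complex.I) * ω ^ i := by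
    rw [← Finset.Ico_add_one_right_eq_Icc, Finset.sum_Ico_eq_sum_range]
    simp only [Nat.succ_sub_one, Nat.add_sub_cancel]
    refine Finset.sum_congr rfl fun i _ => ?_
    have harg : ((n:ℝ) * nd R (1+i) : ℝ) = ((n:ℝ)*π/(2*R)) + (i:ℝ) * ((n:ℝ)*π/R) := by
      simp only [nd]; push_cast; field_simp; ring
    rw [harg, hωdef, ← Complex.exp_nat_mul, ← Complex.exp_add]
    congr 1
    push_cast
    ring
  rw [hrw, ← Finset.mul_sum, geom_sum_eq hω1, hω2R]
  simp

lemma ndvd (R : ℕ) (n : ℤ) (hR : 1 ≤ R) (hn : n.natAbs ≤ 2*R) (h0 : n ≠ 0)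
    (h2 : n.natAbs ≠ 2*R) : ¬ ((2 * (R:ℤ)) ∣ n) := by
  rintro ⟨c, rfl⟩
  have hna : (2*(R:ℤ)*c).natAbs = 2*R*c.natAbs := by
    rw [Int.natAbs_mul, Int.natAbs_mul]; simp
  have hc1 : c.natAbs ≤ 1 := by
    by_contra hgt
    push_neg at hgt
    have : 2*R*2 ≤ 2*R*c.natAbs := Nat.mul_le_mul_left _ hgt
    omega
  have : c.natAbs = 0 ∨ c.natAbs = 1 := by omega
  rcases this with h | h
  · exact h0 (by simp [Int.natAbs_eq_zero.mp h])
  · exact h2 (by rw [hna, h, mul_one])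

lemma Sgen (R : ℕ) (hR : 1 ≤ R) (n : ℤ) (hn : ¬ ((2 * (R:ℤ)) ∣ n)) :
    ∑ μ ∈ Finset.Icc 1 (2*R), Real.cos ((n:ℝ) * nd R μ) = 0 := by
  calc ∑ μ ∈ Finset.Icc 1 (2*R), Real.cos ((n:ℝ) * nd R μ)
      = ∑ μ ∈ Finset.Icc 1 (2*R), (Complex.exp ((((n:ℝ) * nd R μ : ℝ) : ℂ) * Complex.I)).re :=
        Finset.sum_congr rfl fun μ _ => (Complex.exp_ofReal_mul_I_re _).symm
    _ = (∑ μ ∈ Finset.Icc 1 (2*R), Complex.exp ((((n:ℝ) * nd R μ : ℝ) : ℂ) * Complex.I)).re :=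
        (Complex.re_sum _ _).symm
    _ = 0 := by rw [csum R hR n hn]; rfl

lemma Tgen (R : ℕ) (hR : 1 ≤ R) (n : ℤ) (hn : ¬ ((2 * (R:ℤ)) ∣ n)) :
    ∑ μ ∈ Finset.Icc 1 (2*R), Real.sin ((n:ℝ) * nd R μ) = 0 := by
  calc ∑ μ ∈ Finset.Icc 1 (2*R), Real.sin ((n:ℝ) * nd R μ)
      = ∑ μ ∈ Finset.Icc 1 (2*R), (Complex.exp ((((n:ℝ) * nd R μ : ℝ) : ℂ) * Complex.I)).im :=
        Finset.sum_congr rfl fun μ _ => (Complex.exp_ofReal_mul_I_im _).symm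
    _ = (∑ μ ∈ Finset.Icc 1 (2*R), Complex.exp ((((n:ℝ) * nd R μ : ℝ) : ℂ) * Complex.I)).im :=
        (Complex.im_sum _ _).symm
    _ = 0 := by rw [csum R hR n hn]; rfl

lemma nd2R (R μ : ℕ) (hR : 1 ≤ R) : (2*(R:ℝ)) * nd R μ = (μ:ℝ) * (2*π) - π := by
  have hR0 : (R:ℝ) ≠ 0 := by positivity
  simp only [nd]; field_simp

lemma Sval (R : ℕ) (hR : 1 ≤ R) (n : ℤ) (hn : n.natAbs ≤ 2*R) :
    ∑ μ ∈ Finset.Icc 1 (2*R), Real.cos ((n:ℝ) * nd R μ) =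
      if n = 0 then (2*R:ℝ) else if n.natAbs = 2*R then -(2*R:ℝ) else 0 := by
  split_ifs with h0 h2
  · subst h0
    simp [Nat.card_Icc]
  · have hc : ∀ μ ∈ Finset.Icc 1 (2*R), Real.cos ((n:ℝ) * nd R μ) = -1 := by
      intro μ _
      have habs : ((n:ℝ)) = 2*(R:ℝ) ∨ ((n:ℝ)) = -(2*(R:ℝ)) := by
        rcases Int.natAbs_eq n with h | h
        · left; rw [h]; push_cast [h2]; ring
        · right; rw [h]; push_cast [h2]; ring
      have key : Real.cos ((2*(R:ℝ)) * nd R μ) = -1 := by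
        rw [nd2R R μ hR, Real.cos_sub_pi, Real.cos_nat_mul_two_pi]
      rcases habs with h | h
      · rw [h]; exact key
      · rw [h, neg_mul, Real.cos_neg]; exact key
    rw [Finset.sum_congr rfl hc]
    simp [Nat.card_Icc]
  · exact Sgen R hR n (ndvd R n hR hn h0 h2)

lemma Tval (R : ℕ) (hR : 1 ≤ R) (n : ℤ) (hn : n.natAbs ≤ 2*R) :
    ∑ μ ∈ Finset.Icc 1 (2*R), Real.sin ((n:ℝ) * nd R μ) = 0 := by
  by_cases h0 : n = 0
  · subst h0; simp
  by_cases h2 : n.natAbs = 2*R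
  · have hc : ∀ μ ∈ Finset.Icc 1 (2*R), Real.sin ((n:ℝ) * nd R μ) = 0 := by
      intro μ _
      have habs : ((n:ℝ)) = 2*(R:ℝ) ∨ ((n:ℝ)) = -(2*(R:ℝ)) := by
        rcases Int.natAbs_eq n with h | h
        · left; rw [h]; push_cast [h2]; ring
        · right; rw [h]; push_cast [h2]; ring
      have key : Real.sin ((2*(R:ℝ)) * nd R μ) = 0 := by
        rw [nd2R R μ hR, Real.sin_sub_pi]
        have h2μ : (μ:ℝ) * (2*π) = ((2*μ : ℕ):ℝ) * π := by push_cast; ring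
        rw [h2μ, Real.sin_nat_mul_pi, neg_zero]
      rcases habs with h | h
      · rw [h]; exact key
      · rw [h, neg_mul, Real.sin_neg, key, neg_zero]
    rw [Finset.sum_congr rfl hc]
    simp
  · exact Tgen R hR n (ndvd R n hR hn h0 h2)

lemma Sadd (R j k : ℕ) (hR : 1 ≤ R) (hj : j ≤ R) (hk : k ≤ R) :
    ∑ μ ∈ Finset.Icc 1 (2*R), Real.cos ((j:ℝ) * nd R μ + (k:ℝ) * nd R μ) =
      if j + k = 0 then (2*R:ℝ) else if j + k = 2*R then -(2*R:ℝ) else 0 := by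
  have h := Sval R hR ((j:ℤ)+(k:ℤ)) (by omega)
  have e : ∀ μ ∈ Finset.Icc 1 (2*R),
      Real.cos ((j:ℝ) * nd R μ + (k:ℝ) * nd R μ) = Real.cos ((((j:ℤ)+(k:ℤ) : ℤ):ℝ) * nd R μ) := by
    intro μ _; congr 1; push_cast; ring
  rw [Finset.sum_congr rfl e, h]
  split_ifs <;> first | rfl | (exfalso; omega)

lemma Ssub (R j k : ℕ) (hR : 1 ≤ R) (hj : j ≤ R) (hk : k ≤ R) :
    ∑ μ ∈ Finset.Icc 1 (2*R), Real.cos ((j:ℝ) * nd R μ - (k:ℝ) * nd R μ) =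
      if j = k then (2*R:ℝ) else 0 := by
  have h := Sval R hR ((j:ℤ)-(k:ℤ)) (by omega)
  have e : ∀ μ ∈ Finset.Icc 1 (2*R),
      Real.cos ((j:ℝ) * nd R μ - (k:ℝ) * nd R μ) = Real.cos ((((j:ℤ)-(k:ℤ) : ℤ):ℝ) * nd R μ) := by
    intro μ _; congr 1; push_cast; ring
  rw [Finset.sum_congr rfl e, h]
  split_ifs <;> first | rfl | (exfalso; omega)

lemma Tadd (R j k : ℕ) (hR : 1 ≤ R) (hj : j ≤ R) (hk : k ≤ R) :
    ∑ μ ∈ Finset.Icc 1 (2*R), Real.sin ((j:ℝ) * nd R μ + (k:ℝ) * nd R μ) = 0 := by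
  have h := Tval R hR ((j:ℤ)+(k:ℤ)) (by omega)
  have e : ∀ μ ∈ Finset.Icc 1 (2*R),
      Real.sin ((j:ℝ) * nd R μ + (k:ℝ) * nd R μ) = Real.sin ((((j:ℤ)+(k:ℤ) : ℤ):ℝ) * nd R μ) := by
    intro μ _; congr 1; push_cast; ring
  rw [Finset.sum_congr rfl e, h]

lemma Tsub (R j k : ℕ) (hR : 1 ≤ R) (hj : j ≤ R) (hk : k ≤ R) :
    ∑ μ ∈ Finset.Icc 1 (2*R), Real.sin ((j:ℝ) * nd R μ - (k:ℝ) * nd R μ) = 0 := by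
  have h := Tval R hR ((j:ℤ)-(k:ℤ)) (by omega)
  have e : ∀ μ ∈ Finset.Icc 1 (2*R),
      Real.sin ((j:ℝ) * nd R μ - (k:ℝ) * nd R μ) = Real.sin ((((j:ℤ)-(k:ℤ) : ℤ):ℝ) * nd R μ) := by
    intro μ _; congr 1; push_cast; ring
  rw [Finset.sum_congr rfl e, h]

lemma Snat (R k : ℕ) (hR : 1 ≤ R) (hk : k ≤ R) :
    ∑ μ ∈ Finset.Icc 1 (2*R), Real.cos ((k:ℝ) * nd R μ) =
      if k = 0 then (2*R:ℝ) else 0 := by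
  have h := Sval R hR (k:ℤ) (by omega)
  have e : ∀ μ ∈ Finset.Icc 1 (2*R),
      Real.cos ((k:ℝ) * nd R μ) = Real.cos ((((k:ℤ) : ℤ):ℝ) * nd R μ) := by
    intro μ _; congr 1
  rw [Finset.sum_congr rfl e, h]
  split_ifs <;> first | rfl | (exfalso; omega)

lemma Tnat (R k : ℕ) (hR : 1 ≤ R) (hk : k ≤ R) :
    ∑ μ ∈ Finset.Icc 1 (2*R), Real.sin ((k:ℝ) * nd R μ) = 0 := by
  have h := Tval R hR (k:ℤ) (by omega)
  have e : ∀ μ ∈ Finset.Icc 1 (2*R),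
      Real.sin ((k:ℝ) * nd R μ) = Real.sin ((((k:ℤ) : ℤ):ℝ) * nd R μ) := by
    intro μ _; congr 1
  rw [Finset.sum_congr rfl e, h]

lemma pf_cc (a u v : ℝ) : Real.cos v * Real.cos (a - u) =
    (Real.cos a * (Real.cos (u+v) + Real.cos (u-v)) +
      Real.sin a * (Real.sin (u+v) + Real.sin (u-v))) / 2 := by
  rw [Real.cos_sub, Real.cos_add, Real.cos_sub, Real.sin_add, Real.sin_sub]; ring

lemma pf_sc (a u v : ℝ) : Real.sin v * Real.cos (a - u) =
    (Real.cos a * (Real.sin (u+v) - Real.sin (u-v)) +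
      Real.sin a * (Real.cos (u-v) - Real.cos (u+v))) / 2 := by
  rw [Real.cos_sub, Real.sin_add, Real.sin_sub, Real.cos_sub, Real.cos_add]; ring

lemma inner_cc (R j k : ℕ) (hR : 1 ≤ R) (hj : j ≤ R) (hk : k ≤ R) (θ : ℝ) :
    ∑ μ ∈ Finset.Icc 1 (2*R),
        Real.cos ((k:ℝ) * nd R μ) * Real.cos ((j:ℝ) * θ - (j:ℝ) * nd R μ) =
      Real.cos ((j:ℝ) * θ) *
        ((if j + k = 0 then (2*R:ℝ) else if j + k = 2*R then -(2*R:ℝ) else 0) +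
          (if j = k then (2*R:ℝ) else 0)) / 2 := by
  have e : ∀ μ ∈ Finset.Icc 1 (2*R),
      Real.cos ((k:ℝ) * nd R μ) * Real.cos ((j:ℝ) * θ - (j:ℝ) * nd R μ) =
      (Real.cos ((j:ℝ)*θ) * (Real.cos ((j:ℝ) * nd R μ + (k:ℝ) * nd R μ)
          + Real.cos ((j:ℝ) * nd R μ - (k:ℝ) * nd R μ))
        + Real.sin ((j:ℝ)*θ) * (Real.sin ((j:ℝ) * nd R μ + (k:ℝ) * nd R μ)
          + Real.sin ((j:ℝ) * nd R μ - (k:ℝ) * nd R μ))) / 2 :=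
    fun μ _ => pf_cc _ _ _
  rw [Finset.sum_congr rfl e, ← Finset.sum_div, Finset.sum_add_distrib,
    ← Finset.mul_sum, ← Finset.mul_sum, Finset.sum_add_distrib, Finset.sum_add_distrib,
    Sadd R j k hR hj hk, Ssub R j k hR hj hk, Tadd R j k hR hj hk, Tsub R j k hR hj hk]
  ring

lemma inner_sc (R j k : ℕ) (hR : 1 ≤ R) (hj : j ≤ R) (hk : k ≤ R) (θ : ℝ) :
    ∑ μ ∈ Finset.Icc 1 (2*R),
        Real.sin ((k:ℝ) * nd R μ) * Real.cos ((j:ℝ) * θ - (j:ℝ) * nd R μ) =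
      Real.sin ((j:ℝ) * θ) *
        ((if j = k then (2*R:ℝ) else 0) -
          (if j + k = 0 then (2*R:ℝ) else if j + k = 2*R then -(2*R:ℝ) else 0)) / 2 := by
  have e : ∀ μ ∈ Finset.Icc 1 (2*R),
      Real.sin ((k:ℝ) * nd R μ) * Real.cos ((j:ℝ) * θ - (j:ℝ) * nd R μ) =
      (Real.cos ((j:ℝ)*θ) * (Real.sin ((j:ℝ) * nd R μ + (k:ℝ) * nd R μ)
          - Real.sin ((j:ℝ) * nd R μ - (k:ℝ) * nd R μ))
        + Real.sin ((j:ℝ)*θ) * (Real.cos ((j:ℝ) * nd R μ - (k:ℝ) * nd R μ)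
          - Real.cos ((j:ℝ) * nd R μ + (k:ℝ) * nd R μ))) / 2 :=
    fun μ _ => pf_sc _ _ _
  rw [Finset.sum_congr rfl e, ← Finset.sum_div, Finset.sum_add_distrib,
    ← Finset.mul_sum, ← Finset.mul_sum, Finset.sum_sub_distrib, Finset.sum_sub_distrib,
    Sadd R j k hR hj hk, Ssub R j k hR hj hk, Tadd R j k hR hj hk, Tsub R j k hR hj hk]
  ring

lemma kern_expand (R k : ℕ) (θ : ℝ) (g : ℝ → ℝ) :
    ∑ μ ∈ Finset.Icc 1 (2*R), g ((k:ℝ) * nd R μ) * modDirichlet R (θ - nd R μ) =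
      (∑ μ ∈ Finset.Icc 1 (2*R), g ((k:ℝ) * nd R μ)) * (1/(2*(R:ℝ)))
      + (∑ μ ∈ Finset.Icc 1 (2*R),
          g ((k:ℝ) * nd R μ) * Real.cos ((R:ℝ) * θ - (R:ℝ) * nd R μ)) / (2*(R:ℝ))
      + (1/(R:ℝ)) * ∑ i ∈ Finset.Icc 1 (R-1), ∑ μ ∈ Finset.Icc 1 (2*R),
          g ((k:ℝ) * nd R μ) * Real.cos ((i:ℝ) * θ - (i:ℝ) * nd R μ) := by
  rw [Finset.sum_mul, Finset.sum_div, Finset.sum_comm, Finset.mul_sum,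
    ← Finset.sum_add_distrib, ← Finset.sum_add_distrib]
  refine Finset.sum_congr rfl fun μ _ => ?_
  simp only [modDirichlet, mul_sub]
  rw [← Finset.mul_sum]
  ring

lemma kernC (R k : ℕ) (hR : 1 ≤ R) (hk : k ≤ R) (θ : ℝ) :
    ∑ μ ∈ Finset.Icc 1 (2*R), Real.cos ((k:ℝ) * nd R μ) * modDirichlet R (θ - nd R μ) =
      if k = R then 0 else Real.cos ((k:ℝ) * θ) := by
  have hR0 : (R:ℝ) ≠ 0 := by positivity
  rw [kern_expand R k θ Real.cos, Snat R k hR hk, inner_cc R R k hR le_rfl hk θ]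
  have hinner : ∀ i ∈ Finset.Icc 1 (R-1),
      ∑ μ ∈ Finset.Icc 1 (2*R),
          Real.cos ((k:ℝ) * nd R μ) * Real.cos ((i:ℝ) * θ - (i:ℝ) * nd R μ) =
        if i = k then Real.cos ((k:ℝ)*θ) * (R:ℝ) else 0 := by
    intro i hi
    simp only [Finset.mem_Icc] at hi
    rw [inner_cc R i k hR (by omega) hk θ,
      if_neg (show ¬ (i + k = 0) by omega), if_neg (show ¬ (i + k = 2*R) by omega)]
    split_ifs with h
    · subst h; ring
    · ring
  rw [Finset.sum_congr rfl hinner, Finset.sum_ite_eq' (Finset.Icc 1 (R-1)) k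
    (fun _ => Real.cos ((k:ℝ)*θ) * (R:ℝ))]
  simp only [Finset.mem_Icc]
  split_ifs <;>
    first
      | (exfalso; omega)
      | (subst_vars; push_cast; field_simp; simp only [mul_zero, Real.cos_zero]; ring)
      | (subst_vars; push_cast; field_simp; try ring; try tauto)
      | (subst_vars; push_cast; simp; field_simp; try ring; try tauto)

lemma kernS (R k : ℕ) (hR : 1 ≤ R) (hk1 : 1 ≤ k) (hk : k ≤ R) (θ : ℝ) :
    ∑ μ ∈ Finset.Icc 1 (2*R), Real.sin ((k:ℝ) * nd R μ) * modDirichlet R (θ - nd R μ) =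
      Real.sin ((k:ℝ) * θ) := by
  have hR0 : (R:ℝ) ≠ 0 := by positivity
  rw [kern_expand R k θ Real.sin, Tnat R k hR hk, inner_sc R R k hR le_rfl hk θ]
  have hinner : ∀ i ∈ Finset.Icc 1 (R-1),
      ∑ μ ∈ Finset.Icc 1 (2*R),
          Real.sin ((k:ℝ) * nd R μ) * Real.cos ((i:ℝ) * θ - (i:ℝ) * nd R μ) =
        if i = k then Real.sin ((k:ℝ)*θ) * (R:ℝ) else 0 := by
    intro i hi
    simp only [Finset.mem_Icc] at hi
    rw [inner_sc R i k hR (by omega) hk θ,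
      if_neg (show ¬ (i + k = 0) by omega), if_neg (show ¬ (i + k = 2*R) by omega)]
    split_ifs with h
    · subst h; ring
    · ring
  rw [Finset.sum_congr rfl hinner, Finset.sum_ite_eq' (Finset.Icc 1 (R-1)) k
    (fun _ => Real.sin ((k:ℝ)*θ) * (R:ℝ))]
  simp only [Finset.mem_Icc]
  split_ifs <;>
    first
      | (exfalso; omega)
      | (subst_vars; push_cast; field_simp; try ring; try tauto)
      | (subst_vars; push_cast; simp; field_simp; try ring; try tauto)

theorem modified_dirichlet_interpolation (R : ℕ) (hR : 1 ≤ R) (a b : ℕ → ℝ)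
    (f : ℝ → ℝ)
    (hf : ∀ θ : ℝ, f θ = a 0 / 2 +
      ∑ k ∈ Finset.Icc 1 R, (a k * Real.cos (k * θ) + b k * Real.sin (k * θ)))
    (θpt : ℕ → ℝ) (hθ : ∀ μ : ℕ, θpt μ = (2 * μ - 1) * Real.pi / (2 * R)) :
    ∀ θ : ℝ, f θ = a R * Real.cos (R * θ) +
      ∑ μ ∈ Finset.Icc 1 (2 * R), f (θpt μ) * modDirichlet R (θ - θpt μ) := by
  intro θ
  have hnd : ∀ μ : ℕ, θpt μ = nd R μ := fun μ => hθ μ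
  have hD : ∑ μ ∈ Finset.Icc 1 (2*R), modDirichlet R (θ - nd R μ) = 1 := by
    have h := kernC R 0 hR (by omega) θ
    simp only [Nat.cast_zero, zero_mul, Real.cos_zero, one_mul] at h
    rw [h, if_neg (by omega)]
  have key : ∑ μ ∈ Finset.Icc 1 (2 * R), f (nd R μ) * modDirichlet R (θ - nd R μ)
      = a 0 / 2 + ∑ k ∈ Finset.Icc 1 R,
          (a k * Real.cos ((k:ℝ) * θ) + b k * Real.sin ((k:ℝ) * θ))
        - a R * Real.cos ((R:ℝ) * θ) := by
    have e1 : ∀ μ ∈ Finset.Icc 1 (2*R), f (nd R μ) * modDirichlet R (θ - nd R μ)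
        = a 0 / 2 * modDirichlet R (θ - nd R μ)
          + ∑ k ∈ Finset.Icc 1 R,
            (a k * (Real.cos ((k:ℝ) * nd R μ) * modDirichlet R (θ - nd R μ))
              + b k * (Real.sin ((k:ℝ) * nd R μ) * modDirichlet R (θ - nd R μ))) := by
      intro μ _
      rw [hf (nd R μ), add_mul, Finset.sum_mul]
      congr 1
      exact Finset.sum_congr rfl fun k _ => by ring
    rw [Finset.sum_congr rfl e1, Finset.sum_add_distrib, ← Finset.mul_sum, hD, mul_one,
      Finset.sum_comm]
    have e2 : ∀ k ∈ Finset.Icc 1 R,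
        (∑ μ ∈ Finset.Icc 1 (2*R),
          (a k * (Real.cos ((k:ℝ) * nd R μ) * modDirichlet R (θ - nd R μ))
            + b k * (Real.sin ((k:ℝ) * nd R μ) * modDirichlet R (θ - nd R μ))))
        = a k * Real.cos ((k:ℝ) * θ) + b k * Real.sin ((k:ℝ) * θ)
          - (if k = R then a k * Real.cos ((k:ℝ) * θ) else 0) := by
      intro k hk
      simp only [Finset.mem_Icc] at hk
      rw [Finset.sum_add_distrib, ← Finset.mul_sum, ← Finset.mul_sum,
        kernC R k hR (by omega) θ, kernS R k hR (by omega) (by omega) θ]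
      split_ifs with h
      · ring
      · ring
    rw [Finset.sum_congr rfl e2, Finset.sum_sub_distrib]
    have e3 : ∑ k ∈ Finset.Icc 1 R, (if k = R then a k * Real.cos ((k:ℝ) * θ) else 0)
        = a R * Real.cos ((R:ℝ) * θ) := by
      rw [Finset.sum_ite_eq' (Finset.Icc 1 R) R (fun k => a k * Real.cos ((k:ℝ) * θ)),
        if_pos (by simp only [Finset.mem_Icc]; omega)]
    rw [e3]
    ring
  simp only [hnd]
  rw [key, hf θ]
  ring
end

section
/- For any trigonometric polynomial f of degree R, the first derivative satisfies f'(θ) = ∑_{μ=1}^{2R} f(θ + θ_μ) · (-1)^{μ+1}/(4R sin²(θ_μ/2)), where θ_μ = (2μ-1)π/(2R). -/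
open Complex Finset

lemma geom2 (z : ℂ) (n : ℕ) :
    (∑ j ∈ Finset.range n, (j : ℂ) * z ^ j) * (z - 1) ^ 2
      = ((n : ℂ) - 1) * z ^ (n + 1) - (n : ℂ) * z ^ n + z := by
  induction n with
  | zero => simp
  | succ n ih =>
    rw [Finset.sum_range_succ, add_mul, ih]
    push_cast
    ring

lemma map_Ico (R : ℕ) :
    Finset.Ico (-(R : ℤ)) R
      = Finset.map ⟨fun j : ℕ => (j : ℤ) - R, @id (Function.Injective fun j : ℕ => (j : ℤ) - R) (fun a b h => by simpa using h)⟩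
          (Finset.range (2 * R)) := by
  ext x
  simp only [Finset.mem_Ico, Finset.mem_map, Finset.mem_range, Function.Embedding.coeFn_mk]
  constructor
  · rintro ⟨h1, h2⟩; exact ⟨(x + R).toNat, by omega, by omega⟩
  · rintro ⟨j, hj, rfl⟩; omega

lemma Pw (R : ℕ) (hR : 1 ≤ R) (θpt : ℕ → ℝ)
    (hθ : ∀ μ : ℕ, θpt μ = (2 * μ - 1) * Real.pi / (2 * R)) (μ : ℕ)
    (hμ1 : 1 ≤ μ) (hμ2 : μ ≤ 2 * R) :
    (((-1 : ℝ) ^ (μ + 1) / (4 * R * Real.sin (θpt μ / 2) ^ 2) : ℝ) : ℂ)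
      = (1 / (2 * R)) * ∑ k ∈ Finset.Ico (-(R : ℤ)) R,
          Complex.I * k * (Complex.exp (-(Complex.I * (θpt μ : ℝ)))) ^ (k : ℤ) := by
  have hπ := Real.pi_pos
  have hRR : (0:ℝ) < R := by positivity
  have hRC : (R : ℂ) ≠ 0 := Nat.cast_ne_zero.mpr (by omega)
  set θ : ℝ := θpt μ with hθdef
  have hθv : θ = (2 * μ - 1) * Real.pi / (2 * R) := hθ μ
  have hθpos : 0 < θ := by
    rw [hθv]
    have : (1:ℝ) ≤ 2 * μ - 1 := by
      have : (1:ℝ) ≤ (μ:ℝ) := by exact_mod_cast hμ1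
      linarith
    positivity
  have hθlt : θ < 2 * Real.pi := by
    rw [hθv, div_lt_iff₀ (by positivity)]
    have : (μ:ℝ) ≤ 2 * R := by exact_mod_cast hμ2
    nlinarith
  set z : ℂ := Complex.exp (-(Complex.I * (θ:ℝ))) with hzdef
  have hz0 : z ≠ 0 := Complex.exp_ne_zero _
  -- z ≠ 1
  have hz1 : z ≠ 1 := by
    intro h
    rw [hzdef, Complex.exp_eq_one_iff] at h
    obtain ⟨n, hn⟩ := h
    have h2 : (θ : ℂ) = ((-(2 * n * Real.pi) : ℝ) : ℂ) := by
      push_cast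
      linear_combination Complex.I * hn + ((θ:ℂ) + 2*(n:ℂ)*(Real.pi:ℂ)) * Complex.I_sq
    have h3 : θ = -(2 * n * Real.pi) := by exact_mod_cast h2
    rcases le_or_gt 0 n with h4 | h4
    · have : (0:ℝ) ≤ (n:ℝ) := by exact_mod_cast h4
      nlinarith
    · have h5 : n ≤ -1 := by omega
      have : (n:ℝ) ≤ -1 := by exact_mod_cast h5
      nlinarith
  have hzm1 : z - 1 ≠ 0 := sub_ne_zero.mpr hz1
  -- z^R
  have hzR : z ^ R = (-1) ^ μ * Complex.I := by
    rw [hzdef, ← Complex.exp_nat_mul]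
    have harg : (R:ℂ) * (-(Complex.I * (θ:ℝ))) = (Real.pi/2) * Complex.I - μ * (Real.pi * Complex.I) := by
      have hRθ : (R:ℝ) * θ = (2 * μ - 1) * Real.pi / 2 := by
        rw [hθv]; field_simp
      have h2 := congrArg (fun x : ℝ => (x : ℂ)) hRθ
      push_cast at h2 ⊢
      linear_combination (-Complex.I) * h2
    rw [harg, Complex.exp_sub, Complex.exp_nat_mul, Complex.exp_pi_mul_I]
    rw [show ((Real.pi:ℂ)/2) * Complex.I = ((Real.pi/2 : ℝ) : ℂ) * Complex.I by push_cast; ring]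
    rw [Complex.exp_mul_I, ← Complex.ofReal_cos, ← Complex.ofReal_sin,
      Real.cos_pi_div_two, Real.sin_pi_div_two]
    rcases Nat.even_or_odd μ with h | h
    · rw [h.neg_one_pow]; simp
    · rw [h.neg_one_pow]; push_cast; ring
  have hz2R : z ^ (2 * R) = -1 := by
    rw [show 2 * R = R * 2 by ring, pow_mul, hzR]
    rw [mul_pow, ← pow_mul, show μ * 2 = 2 * μ by ring, pow_mul]
    simp [Complex.I_sq]
  -- sin square relation
  have hsin0 : Real.sin (θ/2) ≠ 0 :=
    ne_of_gt (Real.sin_pos_of_pos_of_lt_pi (by linarith) (by linarith))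
  set s : ℝ := Real.sin (θ/2) ^ 2 with hsdef
  have hs0 : (s : ℂ) ≠ 0 := by
    simp only [hsdef]
    push_cast
    exact pow_ne_zero 2 (by have := Complex.ofReal_ne_zero.mpr hsin0; push_cast at this; exact this)
  have hcosR : Real.cos θ = 1 - 2 * s := by
    have h2 : Real.cos (2 * (θ/2)) = 1 - 2 * Real.sin (θ/2)^2 := by
      rw [Real.cos_two_mul]
      nlinarith [Real.sin_sq_add_cos_sq (θ/2)]
    rw [show (2:ℝ) * (θ/2) = θ by ring] at h2
    rw [hsdef]; exact h2
  have he : z * Complex.exp (Complex.I * (θ:ℝ)) = 1 := by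
    rw [hzdef, ← Complex.exp_add,
      show -(Complex.I * (θ:ℂ)) + Complex.I * (θ:ℂ) = 0 by ring, Complex.exp_zero]
  have htc : z + Complex.exp (Complex.I * (θ:ℝ)) = 2 * ((Real.cos θ : ℝ) : ℂ) := by
    rw [hzdef, Complex.ofReal_cos, Complex.two_cos,
      show -(Complex.I * (θ:ℂ)) = -(θ:ℂ) * Complex.I by ring,
      show Complex.I * (θ:ℂ) = (θ:ℂ) * Complex.I by ring, add_comm]
  have hcosC : ((Real.cos θ : ℝ) : ℂ) = 1 - 2 * (s : ℂ) := by
    rw [hcosR]; push_cast; ring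
  have hs : (z - 1) ^ 2 = -4 * z * (s : ℂ) := by
    linear_combination z * htc - he + 2 * z * hcosC
  -- sums
  set A : ℂ := ∑ j ∈ Finset.range (2 * R), (j : ℂ) * z ^ j with hAdef
  set B : ℂ := ∑ j ∈ Finset.range (2 * R), z ^ j with hBdef
  have hA := geom2 z (2 * R)
  rw [pow_succ z (2*R), hz2R] at hA
  have hB := geom_sum_mul z (2 * R)
  rw [hz2R] at hB
  have hC : (A - (R:ℂ) * B) * (z - 1) ^ 2 = 2 * z := by
    push_cast at hA
    linear_combination hA - (R:ℂ) * (z - 1) * hB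
  have h4 : (A - (R:ℂ) * B) * (s:ℂ) = -(1/2) := by
    have hz4 : (-4 : ℂ) * z ≠ 0 := by
      intro h
      apply hz0
      have : (-4:ℂ) ≠ 0 := by norm_num
      exact (mul_eq_zero.mp h).resolve_left this
    apply mul_right_cancel₀ hz4
    rw [show (A - (R:ℂ) * B) * (s:ℂ) * ((-4:ℂ) * z) = (A - (R:ℂ) * B) * ((-4:ℂ) * z * (s:ℂ)) by ring,
        show (-4:ℂ) * z * (s:ℂ) = (z-1)^2 by rw [hs], hC]
    ring
  -- rewrite sum
  rw [map_Ico, Finset.sum_map]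
  simp only [Function.Embedding.coeFn_mk]
  have hterm : ∀ j ∈ Finset.range (2 * R),
      Complex.I * (((j:ℤ) - (R:ℤ) : ℤ) : ℂ) * z ^ ((j : ℤ) - (R:ℤ))
        = (Complex.I / z ^ R) * ((j:ℂ) * z ^ j - (R:ℂ) * z ^ j) := by
    intro j _
    rw [zpow_sub₀ hz0, zpow_natCast, zpow_natCast]
    push_cast
    field_simp
  rw [Finset.sum_congr rfl hterm, ← Finset.mul_sum, Finset.sum_sub_distrib, ← Finset.mul_sum,
      ← hAdef, ← hBdef]
  -- final algebra
  rw [hzR]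
  push_cast
  have hμI : ((-1:ℂ)) ^ μ * Complex.I ≠ 0 := by
    apply mul_ne_zero _ Complex.I_ne_zero
    apply pow_ne_zero
    norm_num
  field_simp
  ring_nf
  ring_nf at h4
  rw [show ((-1:ℂ)) ^ (μ * 2) = 1 by rw [pow_mul']; norm_num]
  linear_combination (-4:ℂ) * h4

lemma map_Icc (R : ℕ) :
    Finset.Icc 1 (2 * R)
      = Finset.map ⟨fun j : ℕ => j + 1, @id (Function.Injective fun j : ℕ => j + 1) (fun a b h => by simpa using h)⟩
          (Finset.range (2 * R)) := by
  ext x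
  simp only [Finset.mem_Icc, Finset.mem_map, Finset.mem_range, Function.Embedding.coeFn_mk]
  constructor
  · rintro ⟨h1, h2⟩; exact ⟨x - 1, by omega, by omega⟩
  · rintro ⟨j, hj, rfl⟩; omega

lemma Esum (R : ℕ) (hR : 1 ≤ R) (θpt : ℕ → ℝ)
    (hθ : ∀ μ : ℕ, θpt μ = (2 * μ - 1) * Real.pi / (2 * R)) (m : ℤ)
    (hm : ¬ ((2 * R : ℤ) ∣ m)) :
    ∑ μ ∈ Finset.Icc 1 (2 * R), Complex.exp (Complex.I * m * θpt μ) = 0 := by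
  have hRR : (R : ℝ) ≠ 0 := by positivity
  have hRC : (R : ℂ) ≠ 0 := by exact_mod_cast Nat.cast_ne_zero.mpr (by omega)
  set x : ℂ := Complex.exp (Complex.I * m * Real.pi / R) with hx
  have hx1 : x ≠ 1 := by
    intro h
    rw [hx, Complex.exp_eq_one_iff] at h
    obtain ⟨n, hn⟩ := h
    apply hm
    refine ⟨n, ?_⟩
    have h2 : (m : ℂ) * Real.pi / R = n * (2 * Real.pi) := by
      have := hn
      field_simp at this ⊢
      have hI : Complex.I ≠ 0 := Complex.I_ne_zero
      linear_combination this
    have h3 : (m : ℝ) * Real.pi / R = n * (2 * Real.pi) := by exact_mod_cast h2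
    have h4 : (m : ℝ) = 2 * R * n := by
      field_simp at h3
      nlinarith [Real.pi_pos, h3]
    exact_mod_cast h4
  rw [map_Icc, Finset.sum_map]
  have key : ∀ j ∈ Finset.range (2 * R),
      Complex.exp (Complex.I * m * (θpt (j + 1) : ℝ))
        = Complex.exp (Complex.I * m * Real.pi / (2 * R)) * x ^ j := by
    intro j hj
    rw [hx, ← Complex.exp_nat_mul, ← Complex.exp_add]
    congr 1
    rw [hθ]
    push_cast
    field_simp
    ring
  simp only [Function.Embedding.coeFn_mk]
  rw [Finset.sum_congr rfl key, ← Finset.mul_sum, geom_sum_eq hx1]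
  have hxn : x ^ (2 * R) = 1 := by
    rw [hx, ← Complex.exp_nat_mul]
    have : (2 * R : ℕ) * (Complex.I * m * Real.pi / R) = m * (2 * Real.pi * Complex.I) := by
      push_cast
      field_simp
    rw [this, Complex.exp_int_mul_two_pi_mul_I]
  rw [hxn]
  simp

lemma not_dvd_small (n m : ℤ) (h2 : m ≠ 0) (h3 : -n < m) (h4 : m < n) : ¬ n ∣ m := by
  intro hd
  rcases lt_or_gt_of_ne h2 with h | h
  · have := Int.le_of_dvd (by omega) ((dvd_neg).mpr hd)
    omega
  · have := Int.le_of_dvd h hd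
    omega

lemma Ksum (R : ℕ) (hR : 1 ≤ R) (θpt : ℕ → ℝ)
    (hθ : ∀ μ : ℕ, θpt μ = (2 * μ - 1) * Real.pi / (2 * R)) (l : ℤ)
    (hl1 : -(R:ℤ) ≤ l) (hl2 : l ≤ R) :
    ∑ μ ∈ Finset.Icc 1 (2 * R),
        (((-1 : ℝ) ^ (μ + 1) / (4 * R * Real.sin (θpt μ / 2) ^ 2) : ℝ) : ℂ) *
          Complex.exp (Complex.I * (l : ℂ) * (θpt μ : ℝ))
      = Complex.I * l := by
  have hRC : ((2 * R : ℕ) : ℂ) ≠ 0 := Nat.cast_ne_zero.mpr (by omega)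
  have hRC' : (R : ℂ) ≠ 0 := Nat.cast_ne_zero.mpr (by omega)
  have step1 : ∀ μ ∈ Finset.Icc 1 (2 * R),
      (((-1 : ℝ) ^ (μ + 1) / (4 * R * Real.sin (θpt μ / 2) ^ 2) : ℝ) : ℂ) *
          Complex.exp (Complex.I * (l : ℂ) * (θpt μ : ℝ))
        = (1 / (2 * (R:ℂ))) * ∑ k ∈ Finset.Ico (-(R : ℤ)) R,
            Complex.I * (k : ℂ) * Complex.exp (Complex.I * ((l - k : ℤ) : ℂ) * (θpt μ : ℝ)) := by
    intro μ hμ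
    rw [Finset.mem_Icc] at hμ
    rw [Pw R hR θpt hθ μ hμ.1 hμ.2, mul_assoc, Finset.sum_mul]
    congr 1
    apply Finset.sum_congr rfl
    intro k _
    have hz : (Complex.exp (-(Complex.I * (θpt μ : ℝ)))) ^ (k:ℤ) *
          Complex.exp (Complex.I * (l:ℂ) * (θpt μ : ℝ))
        = Complex.exp (Complex.I * ((l - k : ℤ):ℂ) * (θpt μ:ℝ)) := by
      rw [show (Complex.exp (-(Complex.I * (θpt μ : ℝ)))) ^ (k:ℤ)
            = Complex.exp ((k : ℂ) * (-(Complex.I * (θpt μ : ℝ)))) from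
          (Complex.exp_int_mul _ k).symm, ← Complex.exp_add]
      congr 1
      push_cast
      ring
    linear_combination (Complex.I * (k:ℂ)) * hz
  rw [Finset.sum_congr rfl step1, ← Finset.mul_sum, Finset.sum_comm]
  have hswap : ∀ k ∈ Finset.Ico (-(R : ℤ)) R,
      ∑ μ ∈ Finset.Icc 1 (2 * R),
          Complex.I * (k : ℂ) * Complex.exp (Complex.I * ((l - k : ℤ) : ℂ) * (θpt μ : ℝ))
        = Complex.I * (k : ℂ) *
            ∑ μ ∈ Finset.Icc 1 (2 * R), Complex.exp (Complex.I * ((l - k : ℤ) : ℂ) * (θpt μ : ℝ)) := by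
    intro k _
    rw [Finset.mul_sum]
  rw [Finset.sum_congr rfl hswap]
  rcases eq_or_lt_of_le hl2 with rfl | hlt
  · -- l = R, the special endpoint
    rw [Finset.sum_eq_single (-(R:ℤ))]
    · have hin : ∀ μ ∈ Finset.Icc 1 (2 * R),
          Complex.exp (Complex.I * ((R - -(R:ℤ) : ℤ) : ℂ) * (θpt μ : ℝ)) = -1 := by
        intro μ hμ
        rw [hθ μ, show Complex.I * ((((R:ℤ) - -(R:ℤ)) : ℤ) : ℂ) * (((2 * μ - 1) * Real.pi / (2 * R) : ℝ) : ℂ)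
              = ((2 * (μ:ℤ) - 1 : ℤ) : ℂ) * ((Real.pi : ℂ) * Complex.I) by
            push_cast; field_simp; ring,
          Complex.exp_int_mul, Complex.exp_pi_mul_I,
          Odd.neg_one_zpow ⟨(μ:ℤ) - 1, by ring⟩]
      rw [Finset.sum_congr rfl hin]
      simp only [Finset.sum_const, Nat.card_Icc]
      push_cast
      field_simp
      rw [nsmul_eq_mul]; push_cast; ring
    · intro k hk hkne
      rw [Finset.mem_Ico] at hk
      rw [Esum R hR θpt hθ ((R:ℤ) - k) (not_dvd_small _ _ (by omega) (by omega) (by omega))]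
      ring
    · intro hnot
      exfalso
      apply hnot
      rw [Finset.mem_Ico]
      omega
  · -- l < R
    rw [Finset.sum_eq_single l]
    · have hin : ∀ μ ∈ Finset.Icc 1 (2 * R),
          Complex.exp (Complex.I * ((l - l : ℤ) : ℂ) * (θpt μ : ℝ)) = 1 := by
        intro μ _
        simp
      rw [Finset.sum_congr rfl hin]
      simp only [Finset.sum_const, Nat.card_Icc]
      push_cast
      field_simp
      rw [nsmul_eq_mul]; push_cast; ring
    · intro k hk hkne
      rw [Finset.mem_Ico] at hk
      rw [Esum R hR θpt hθ (l - k) (not_dvd_small _ _ (by omega) (by omega) (by omega))]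
      ring
    · intro hnot
      exfalso
      apply hnot
      rw [Finset.mem_Ico]
      omega

theorem first_order_gpsr_modified (R : ℕ) (hR : 1 ≤ R) (c : ℤ → ℂ)
    (f : ℝ → ℂ)
    (hf : ∀ θ : ℝ, f θ = ∑ k ∈ Finset.Icc (-(R : ℤ)) R, c k * Complex.exp (Complex.I * k * θ))
    (θpt : ℕ → ℝ) (hθ : ∀ μ : ℕ, θpt μ = (2 * μ - 1) * Real.pi / (2 * R)) :
    ∀ θ : ℝ, deriv f θ =
      ∑ μ ∈ Finset.Icc 1 (2 * R), f (θ + θpt μ) *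
        (((-1 : ℝ) ^ (μ + 1) / (4 * R * Real.sin (θpt μ / 2) ^ 2) : ℝ) : ℂ) := by
  intro θ
  have hfd : HasDerivAt f
      (∑ k ∈ Finset.Icc (-(R : ℤ)) R, c k * (Complex.I * k) * Complex.exp (Complex.I * k * θ)) θ := by
    have hfe : f = fun θ' : ℝ => ∑ k ∈ Finset.Icc (-(R : ℤ)) R, c k * Complex.exp (Complex.I * k * θ') :=
      funext hf
    rw [hfe]
    apply HasDerivAt.fun_sum
    intro k _
    have h0 : HasDerivAt (fun z : ℂ => Complex.I * (k:ℂ) * z) (Complex.I * (k:ℂ)) (θ:ℂ) := by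
      simpa using (hasDerivAt_id (θ:ℂ)).const_mul (Complex.I * (k:ℂ))
    have h1 := h0.cexp
    have h2 := h1.comp_ofReal
    have h3 := h2.const_mul (c k)
    simpa [mul_comm, mul_assoc, mul_left_comm] using h3
  rw [hfd.deriv]
  have hR2 : ∀ μ ∈ Finset.Icc 1 (2 * R),
      f (θ + θpt μ) * (((-1 : ℝ) ^ (μ + 1) / (4 * R * Real.sin (θpt μ / 2) ^ 2) : ℝ) : ℂ)
        = ∑ k ∈ Finset.Icc (-(R : ℤ)) R, (c k * Complex.exp (Complex.I * k * θ)) *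
            ((((-1 : ℝ) ^ (μ + 1) / (4 * R * Real.sin (θpt μ / 2) ^ 2) : ℝ) : ℂ) *
              Complex.exp (Complex.I * (k : ℂ) * (θpt μ : ℝ))) := by
    intro μ _
    rw [hf (θ + θpt μ), Finset.sum_mul]
    apply Finset.sum_congr rfl
    intro k _
    have hsplit : Complex.exp (Complex.I * (k:ℂ) * ((θ + θpt μ : ℝ) : ℂ))
        = Complex.exp (Complex.I * (k:ℂ) * (θ:ℂ)) * Complex.exp (Complex.I * (k:ℂ) * ((θpt μ : ℝ):ℂ)) := by
      rw [← Complex.exp_add]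
      congr 1
      push_cast
      ring
    rw [hsplit]
    ring
  rw [Finset.sum_congr rfl hR2, Finset.sum_comm]
  apply Finset.sum_congr rfl
  intro k hk
  rw [Finset.mem_Icc] at hk
  rw [← Finset.mul_sum, Ksum R hR θpt hθ k hk.1 hk.2]
  ring
end

section
/- For the Dirichlet kernel D of order R, ∑_{μ=1}^{R} 1/(2 sin²(θ_μ/2)) = R(R+1)/3, where θ_μ = 2πμ/(2R+1). -/
open Real Finset

noncomputable def wsum (n : ℕ) (z : ℂ) : ℂ := ∑ k ∈ Finset.range n, (k : ℂ) * z ^ k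

lemma one_sub_mul_wsum (n : ℕ) (z : ℂ) :
    (1 - z) * wsum n z = (∑ k ∈ Finset.range n, z ^ k) - 1 - ((n : ℂ) - 1) * z ^ n := by
  induction n with
  | zero => simp [wsum]
  | succ n ih =>
    rw [wsum, Finset.sum_range_succ, ← wsum, mul_add, ih, Finset.sum_range_succ]
    push_cast
    ring

lemma wsum_root {n : ℕ} {z : ℂ} (hz : z ^ n = 1) (h1 : z ≠ 1) :
    (1 - z) * wsum n z = -(n : ℂ) := by
  have hg : (∑ k ∈ Finset.range n, z ^ k) = 0 := by
    have h := geom_sum_mul z n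
    rw [hz, sub_self] at h
    exact (mul_eq_zero.mp h).resolve_right (sub_ne_zero.mpr h1)
  rw [one_sub_mul_wsum, hg, hz]; ring

lemma sum_range_cast_id (n : ℕ) : ∑ k ∈ Finset.range n, (k : ℂ) = n * (n - 1) / 2 := by
  induction n with
  | zero => simp
  | succ n ih => rw [Finset.sum_range_succ, ih]; push_cast; ring

lemma sum_range_cast_sq (n : ℕ) :
    ∑ k ∈ Finset.range n, (k : ℂ) ^ 2 = n * (n - 1) * (2 * n - 1) / 6 := by
  induction n with
  | zero => simp
  | succ n ih => rw [Finset.sum_range_succ, ih]; push_cast; ring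

lemma orth (n : ℕ) {ζ : ℂ} (hζ : IsPrimitiveRoot ζ n)
    (j k : ℕ) (hj : j < n) (hk : k < n) :
    ∑ μ ∈ Finset.range n, (ζ ^ ((j : ℤ) - (k : ℤ))) ^ μ
      = if j = k then (n : ℂ) else 0 := by
  by_cases h : j = k
  · simp [h]
  · rw [if_neg h]
    set w : ℂ := ζ ^ ((j : ℤ) - (k : ℤ)) with hw
    have hw1 : w ≠ 1 := by
      rw [hw, Ne, hζ.zpow_eq_one_iff_dvd]
      intro hd
      have h0 := Int.eq_zero_of_abs_lt_dvd hd (by rw [abs_sub_lt_iff]; omega)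
      omega
    have hwn : w ^ n = 1 := by
      rw [hw, ← zpow_natCast, ← zpow_mul, mul_comm, zpow_mul, zpow_natCast,
        hζ.pow_eq_one, one_zpow]
    have h2 := geom_sum_mul w n
    rw [hwn, sub_self] at h2
    exact (mul_eq_zero.mp h2).resolve_right (sub_ne_zero.mpr hw1)

lemma sum_prod (n : ℕ) (hn : n ≠ 0) {ζ : ℂ} (hζ : IsPrimitiveRoot ζ n) :
    ∑ μ ∈ Finset.range n, wsum n (ζ ^ μ) * wsum n ((ζ ^ μ)⁻¹)
      = n * ∑ k ∈ Finset.range n, (k : ℂ) ^ 2 := by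
  have hζ0 : ζ ≠ 0 := hζ.ne_zero hn
  have expand : ∀ μ, wsum n (ζ ^ μ) * wsum n ((ζ ^ μ)⁻¹)
      = ∑ j ∈ Finset.range n, ∑ k ∈ Finset.range n,
          (j : ℂ) * k * (ζ ^ ((j:ℤ) - k)) ^ μ := by
    intro μ
    rw [wsum, wsum, Finset.sum_mul_sum]
    refine Finset.sum_congr rfl fun j _ => Finset.sum_congr rfl fun k _ => ?_
    have key : (ζ ^ μ) ^ j * ((ζ ^ μ)⁻¹) ^ k = (ζ ^ ((j:ℤ) - k)) ^ μ := by
      rw [← zpow_natCast ζ μ, ← zpow_natCast (ζ ^ (μ:ℤ)) j,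
        ← zpow_natCast ((ζ ^ (μ:ℤ))⁻¹) k, inv_zpow, ← zpow_neg, ← zpow_mul, ← zpow_mul,
        ← zpow_add₀ hζ0, ← zpow_natCast (ζ ^ ((j:ℤ) - k)) μ, ← zpow_mul]
      congr 1
      ring
    calc (j : ℂ) * (ζ ^ μ) ^ j * ((k : ℂ) * ((ζ ^ μ)⁻¹) ^ k)
        = (j : ℂ) * k * ((ζ ^ μ) ^ j * ((ζ ^ μ)⁻¹) ^ k) := by ring
      _ = (j : ℂ) * k * (ζ ^ ((j:ℤ) - k)) ^ μ := by rw [key]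
  rw [Finset.sum_congr rfl fun μ _ => expand μ]
  rw [Finset.sum_comm]
  rw [Finset.sum_congr rfl fun j _ => Finset.sum_comm]
  have inner : ∀ j ∈ Finset.range n, (∑ k ∈ Finset.range n, ∑ μ ∈ Finset.range n,
      (j : ℂ) * k * (ζ ^ ((j:ℤ) - k)) ^ μ) = (j : ℂ) * j * n := by
    intro j hj
    rw [Finset.mem_range] at hj
    have h : ∀ k ∈ Finset.range n, (∑ μ ∈ Finset.range n,
        (j : ℂ) * k * (ζ ^ ((j:ℤ) - k)) ^ μ) = if j = k then (j:ℂ) * k * n else 0 := by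
      intro k hk
      rw [Finset.mem_range] at hk
      rw [← Finset.mul_sum, orth n hζ j k hj hk]
      split_ifs <;> simp
    rw [Finset.sum_congr rfl h, Finset.sum_ite_eq, if_pos (Finset.mem_range.mpr hj)]
  rw [Finset.sum_congr rfl inner, Finset.mul_sum]
  exact Finset.sum_congr rfl fun j _ => by ring

lemma pointwise_csc (n μ : ℕ) (hμ1 : 1 ≤ μ) (hμ2 : μ < n) :
    (((1 : ℝ) / (2 * Real.sin (Real.pi * μ / n) ^ 2) : ℝ) : ℂ)
      = 2 * (wsum n ((Complex.exp (2 * (Real.pi : ℂ) * Complex.I / (n : ℂ))) ^ μ) *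
          wsum n (((Complex.exp (2 * (Real.pi : ℂ) * Complex.I / (n : ℂ))) ^ μ)⁻¹)) /
          (n : ℂ) ^ 2 := by
  have hn : n ≠ 0 := by omega
  set ζ : ℂ := Complex.exp (2 * (Real.pi : ℂ) * Complex.I / (n : ℂ)) with hζdef
  have hζ : IsPrimitiveRoot ζ n := Complex.isPrimitiveRoot_exp n hn
  set θ : ℝ := 2 * Real.pi * μ / n with hθdef
  have hwθ : ζ ^ μ = Complex.exp ((θ : ℂ) * Complex.I) := by
    rw [hζdef, ← Complex.exp_nat_mul]
    congr 1
    rw [hθdef]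
    push_cast
    have hnne : ((n : ℝ) : ℂ) ≠ 0 := by
      simp only [Ne, Complex.ofReal_natCast, Nat.cast_eq_zero]; exact hn
    field_simp
  have hw0 : ζ ^ μ ≠ 0 := by rw [hwθ]; exact Complex.exp_ne_zero _
  have hwn : (ζ ^ μ) ^ n = 1 := by
    rw [← pow_mul, mul_comm, pow_mul, hζ.pow_eq_one, one_pow]
  have hw1 : ζ ^ μ ≠ 1 := hζ.pow_ne_one_of_pos_of_lt (by omega) hμ2
  have hvn : ((ζ ^ μ)⁻¹) ^ n = 1 := by rw [inv_pow, hwn, inv_one]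
  have hv1 : (ζ ^ μ)⁻¹ ≠ 1 := by
    simpa [inv_eq_one] using hw1
  have e1 := wsum_root hwn hw1
  have e2 := wsum_root hvn hv1
  set s : ℝ := Real.sin (Real.pi * μ / n) with hsdef
  have hsum : ζ ^ μ + (ζ ^ μ)⁻¹ = 2 * Complex.cos (θ : ℂ) := by
    rw [hwθ, ← Complex.exp_neg, Complex.two_cos, neg_mul]
  have hcos : Real.cos θ = 1 - 2 * s ^ 2 := by
    have h2 : θ = 2 * (Real.pi * μ / n) := by rw [hθdef]; ring
    rw [h2, Real.cos_two_mul, Real.cos_sq', hsdef]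
    ring
  have hfac : (1 - ζ ^ μ) * (1 - (ζ ^ μ)⁻¹) = ((4 * s ^ 2 : ℝ) : ℂ) := by
    have hws : ζ ^ μ * (ζ ^ μ)⁻¹ = 1 := mul_inv_cancel₀ hw0
    calc (1 - ζ ^ μ) * (1 - (ζ ^ μ)⁻¹)
        = 1 + ζ ^ μ * (ζ ^ μ)⁻¹ - (ζ ^ μ + (ζ ^ μ)⁻¹) := by ring
      _ = 2 - 2 * Complex.cos (θ : ℂ) := by rw [hws, hsum]; ring
      _ = ((4 * s ^ 2 : ℝ) : ℂ) := by
          rw [← Complex.ofReal_cos, hcos]; push_cast; ring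
  have hs0 : s ≠ 0 := by
    have hpos : 0 < Real.pi * μ / n := by positivity
    have hlt : Real.pi * μ / n < Real.pi := by
      rw [div_lt_iff₀ (by positivity : (0:ℝ) < n)]
      have hlt' : (μ : ℝ) < n := by exact_mod_cast hμ2
      nlinarith [Real.pi_pos]
    exact ne_of_gt (Real.sin_pos_of_pos_of_lt_pi hpos hlt)
  have hn0' : (n : ℂ) ≠ 0 := Nat.cast_ne_zero.mpr hn
  have hP : ((4 * s ^ 2 : ℝ) : ℂ) * (wsum n (ζ ^ μ) * wsum n ((ζ ^ μ)⁻¹)) = (n : ℂ) ^ 2 := by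
    rw [← hfac]
    calc (1 - ζ ^ μ) * (1 - (ζ ^ μ)⁻¹) * (wsum n (ζ ^ μ) * wsum n ((ζ ^ μ)⁻¹))
        = ((1 - ζ ^ μ) * wsum n (ζ ^ μ)) * ((1 - (ζ ^ μ)⁻¹) * wsum n ((ζ ^ μ)⁻¹)) := by ring
      _ = (-(n : ℂ)) * (-(n : ℂ)) := by rw [e1, e2]
      _ = (n : ℂ) ^ 2 := by ring
  rw [eq_div_iff (pow_ne_zero 2 hn0')]
  calc ((1 / (2 * s ^ 2) : ℝ) : ℂ) * (n : ℂ) ^ 2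
      = ((1 / (2 * s ^ 2) : ℝ) : ℂ) * (((4 * s ^ 2 : ℝ) : ℂ) *
          (wsum n (ζ ^ μ) * wsum n ((ζ ^ μ)⁻¹))) := by rw [hP]
    _ = (((1 / (2 * s ^ 2)) * (4 * s ^ 2) : ℝ) : ℂ) *
          (wsum n (ζ ^ μ) * wsum n ((ζ ^ μ)⁻¹)) := by
        rw [← mul_assoc, ← Complex.ofReal_mul]
    _ = 2 * (wsum n (ζ ^ μ) * wsum n ((ζ ^ μ)⁻¹)) := by
        have h4 : (1 / (2 * s ^ 2)) * (4 * s ^ 2) = 2 := by field_simp; ring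
        rw [h4]; norm_num

theorem sum_inv_sin_sq (R : ℕ) (hR : 1 ≤ R) :
    ∑ μ ∈ Finset.Icc 1 R, (1 : ℝ) / (2 * Real.sin (Real.pi * μ / (2 * R + 1)) ^ 2) =
      (R : ℝ) * (R + 1) / 3 := by
  have hn : (2*R+1 : ℕ) ≠ 0 := by omega
  have hcastn : ((2*R+1 : ℕ) : ℝ) = 2*(R:ℝ)+1 := by push_cast; ring
  set ζ : ℂ := Complex.exp (2 * (Real.pi : ℂ) * Complex.I / ((2*R+1 : ℕ) : ℂ)) with hζdef
  have hζ : IsPrimitiveRoot ζ (2*R+1) := Complex.isPrimitiveRoot_exp _ hn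
  set F : ℕ → ℝ := fun μ => (1:ℝ)/(2 * Real.sin (Real.pi * μ / ((2*R+1 : ℕ):ℝ))^2) with hF
  have hgoal : ∑ μ ∈ Finset.Icc 1 R,
      (1:ℝ)/(2 * Real.sin (Real.pi * μ / (2*(R:ℝ)+1))^2) = ∑ μ ∈ Finset.Icc 1 R, F μ := by
    refine Finset.sum_congr rfl fun μ _ => ?_
    simp only [hF, hcastn]
  rw [hgoal]
  -- symmetry
  have hsym : ∑ μ ∈ Finset.Ioc R (2*R), F μ = ∑ μ ∈ Finset.Ioc 0 R, F μ := by
    refine Finset.sum_bij' (fun μ _ => 2*R+1-μ) (fun μ _ => 2*R+1-μ) ?_ ?_ ?_ ?_ ?_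
    · intro a ha; simp only [Finset.mem_Ioc] at ha ⊢; omega
    · intro a ha; simp only [Finset.mem_Ioc] at ha ⊢; omega
    · intro a ha; simp only [Finset.mem_Ioc] at ha ⊢; omega
    · intro a ha; simp only [Finset.mem_Ioc] at ha ⊢; omega
    · intro a ha; simp only [Finset.mem_Ioc] at ha
      simp only [hF]
      have hc : ((2*R+1-a : ℕ) : ℝ) = ((2*R+1:ℕ):ℝ) - a := by
        have hle : a ≤ 2*R+1 := by omega
        push_cast [hle]; ring
      rw [hc]
      have hne : ((2*R+1:ℕ):ℝ) ≠ 0 := by rw [hcastn]; positivity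
      have h2 : Real.pi * (((2*R+1:ℕ):ℝ) - a) / ((2*R+1:ℕ):ℝ)
          = Real.pi - Real.pi * a / ((2*R+1:ℕ):ℝ) := by
        field_simp
      rw [h2, Real.sin_pi_sub]
  have hsplit : ∑ μ ∈ Finset.Icc 1 (2*R), F μ = 2 * ∑ μ ∈ Finset.Icc 1 R, F μ := by
    have e1 : (Finset.Icc 1 (2*R) : Finset ℕ) = Finset.Ioc 0 (2*R) := Finset.Icc_add_one_left_eq_Ioc 0 (2*R)
    have e2 : (Finset.Icc 1 R : Finset ℕ) = Finset.Ioc 0 R := Finset.Icc_add_one_left_eq_Ioc 0 R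
    rw [e1, e2, ← Finset.sum_Ioc_consecutive F (Nat.zero_le R) (by omega : R ≤ 2*R), hsym]
    ring
  -- complex sum evaluation
  have hw00 : wsum (2*R+1) (ζ^0) * wsum (2*R+1) ((ζ^0)⁻¹)
      = (∑ k ∈ Finset.range (2*R+1), (k:ℂ))^2 := by
    simp [wsum, sq]
  have hWsum : ∑ μ ∈ Finset.Icc 1 (2*R), (wsum (2*R+1) (ζ^μ) * wsum (2*R+1) ((ζ^μ)⁻¹))
      = ((2*R+1:ℕ):ℂ) * (∑ k ∈ Finset.range (2*R+1), (k:ℂ)^2)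
        - (∑ k ∈ Finset.range (2*R+1), (k:ℂ))^2 := by
    have h0 : wsum (2*R+1) (ζ^0) * wsum (2*R+1) ((ζ^0)⁻¹)
        + ∑ μ ∈ Finset.Ioc 0 (2*R), (wsum (2*R+1) (ζ^μ) * wsum (2*R+1) ((ζ^μ)⁻¹))
        = ∑ μ ∈ Finset.Icc 0 (2*R), (wsum (2*R+1) (ζ^μ) * wsum (2*R+1) ((ζ^μ)⁻¹)) :=
      Finset.add_sum_Ioc_eq_sum_Icc
        (f := fun μ => wsum (2*R+1) (ζ^μ) * wsum (2*R+1) ((ζ^μ)⁻¹)) (Nat.zero_le (2*R))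
    have h1 : (Finset.Icc 0 (2*R) : Finset ℕ) = Finset.range (2*R+1) := by
      rw [← Finset.Ico_add_one_right_eq_Icc, Nat.Ico_zero_eq_range]
    have h2 : (Finset.Icc 1 (2*R) : Finset ℕ) = Finset.Ioc 0 (2*R) := Finset.Icc_add_one_left_eq_Ioc 0 (2*R)
    rw [h1, sum_prod (2*R+1) hn hζ, hw00] at h0
    rw [h2]
    linear_combination h0
  -- cast and combine
  have hnC : ((2*R+1:ℕ):ℂ) ≠ 0 := Nat.cast_ne_zero.mpr hn
  have hkey : ((∑ μ ∈ Finset.Icc 1 (2*R), F μ : ℝ) : ℂ)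
      = 2 * (∑ μ ∈ Finset.Icc 1 (2*R), (wsum (2*R+1) (ζ^μ) * wsum (2*R+1) ((ζ^μ)⁻¹)))
        / ((2*R+1:ℕ):ℂ)^2 := by
    rw [Complex.ofReal_sum, Finset.mul_sum, Finset.sum_div]
    refine Finset.sum_congr rfl fun μ hμ => ?_
    rw [Finset.mem_Icc] at hμ
    simp only [hF]
    exact pointwise_csc (2*R+1) μ hμ.1 (by omega)
  have hfin : ((∑ μ ∈ Finset.Icc 1 (2*R), F μ : ℝ) : ℂ)
      = ((((2*(R:ℝ)+1)^2 - 1)/6 : ℝ) : ℂ) := by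
    rw [hkey, hWsum, sum_range_cast_id, sum_range_cast_sq]
    have hnC' : (2*(R:ℂ)+1) ≠ 0 := by
      push_cast at hnC; exact hnC
    push_cast
    field_simp
    ring
  have hreal : ∑ μ ∈ Finset.Icc 1 (2*R), F μ = ((2*(R:ℝ)+1)^2 - 1)/6 :=
    Complex.ofReal_inj.mp hfin
  rw [hsplit] at hreal
  have hr : ((2*(R:ℝ)+1)^2-1)/6 = 2*((R:ℝ)*((R:ℝ)+1)/3) := by ring
  linarith
end
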